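/- arXiv:1709.03908 — 3 statements merged into one kernel-verified Lean document; each statement's English description precedes it below -/
import Mathlib

section
/- Let γ, θ ∈ F_{q^{2n}} have non-square norms N_{q^{2n}/q} in F_q, let gcd(s,2n)=gcd(t,2n)=1, and let 1 < k < 2n−1 with (k ≠ n or n ≥ 3). If D_{k,s}(γ) and D_{k,t}(θ) are equivalent via (φ_1, φ_2, ρ) (i.e., φ_1 ∘ f^ρ ∘ φ_2 ∈ D_{k,t}(θ) for all f ∈ D_{k,s}(γ), with φ_1, φ_2 linearized permutation polynomials of F_{q^{2n}}), then φ_1 and φ_2 are monomials, i.e., φ_1 = d X^{q^l} and φ_2 = g X^{q^j} for some nonzero d, g ∈ F_{q^{2n}} and integers l, j. -/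
/-- `φ : K → K` is (induced by) a `q`-linearized polynomial modulo `X^{q^n} - X`. -/
def IsLinPoly (q n : ℕ) {K : Type*} [Field K] (φ : K → K) : Prop :=
  ∃ a : Fin n → K, φ = fun x => ∑ i : Fin n, a i * x ^ q ^ (i : ℕ)

/-- The code `D_{k,s}(γ)` as a set of `F_q`-linear maps on `F_{q^{2n}}`. -/
def DFun (q s n k : ℕ) {K : Type*} [Field K] (γ : K) : Set (K → K) :=
  {f | ∃ a b : K, a ^ q ^ n = a ∧ b ^ q ^ n = b ∧ ∃ c : ℕ → K,
    f = fun x => a * x + (∑ i ∈ Finset.Ioo 0 k, c i * x ^ q ^ (s * i))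
      + γ * b * x ^ q ^ (s * k)}


open Finset Polynomial

/-- root-count bound -/
lemma roots_card_aux {K : Type*} [Field K] [DecidableEq K] (P : Polynomial K) (hP : P ≠ 0)
    (S : Finset K) (h : ∀ x ∈ S, P.eval x = 0) : S.card ≤ P.natDegree := by
  have hsub : S ⊆ P.roots.toFinset := by
    intro x hx
    simp [Polynomial.mem_roots, hP, Polynomial.IsRoot, h x hx]
  calc S.card ≤ P.roots.toFinset.card := Finset.card_le_card hsub
    _ ≤ Multiset.card P.roots := P.roots.toFinset_card_le
    _ ≤ P.natDegree := P.card_roots'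

/-- coefficient extraction for polynomials with exponents `q^i`, `i < m`, vanishing on a
large set. -/
lemma linpoly_zero_of_vanish {K : Type*} [Field K] [DecidableEq K] {q m : ℕ} (hq : 2 ≤ q)
    (hm : 0 < m) (S : Finset K) (hS : q ^ (m - 1) < S.card) (c : ℕ → K)
    (h : ∀ u ∈ S, ∑ i ∈ Finset.range m, c i * u ^ q ^ i = 0) :
    ∀ i < m, c i = 0 := by
  set P : Polynomial K := ∑ i ∈ Finset.range m, Polynomial.C (c i) * Polynomial.X ^ q ^ i with hP
  have hev : ∀ u ∈ S, P.eval u = 0 := by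
    intro u hu
    rw [hP]
    simpa [Polynomial.eval_finset_sum] using h u hu
  have hdeg : P.natDegree ≤ q ^ (m - 1) := by
    apply Polynomial.natDegree_sum_le_of_forall_le
    intro i hi
    simp only [Finset.mem_range] at hi
    apply le_trans (Polynomial.natDegree_C_mul_le _ _)
    simp only [Polynomial.natDegree_X_pow]
    exact Nat.pow_le_pow_right (by omega) (by omega)
  have hP0 : P = 0 := by
    by_contra hne
    have := roots_card_aux P hne S hev
    omega
  intro i hi
  have hcoeff : P.coeff (q ^ i) = c i := by
    rw [hP, Polynomial.finset_sum_coeff]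
    rw [Finset.sum_eq_single i]
    · simp
    · intro j hj hne
      rw [Polynomial.coeff_C_mul, Polynomial.coeff_X_pow, if_neg, mul_zero]
      exact fun hc => hne (Nat.pow_right_injective hq hc.symm)
    · intro h; exact absurd (Finset.mem_range.mpr hi) h
  rw [← hcoeff, hP0, Polynomial.coeff_zero]
open Finset

section
variable {K : Type*} [Field K] [Fintype K] {q N : ℕ}

/-- exponent reduction modulo N -/
lemma pow_red (hK : Fintype.card K = q ^ N) (a : ℕ) (x : K) :
    x ^ q ^ a = x ^ q ^ (a % N) := by
  conv_lhs => rw [← Nat.mod_add_div a N]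
  generalize a / N = d
  induction d with
  | zero => simp
  | succ d ih =>
    have : a % N + N * (d + 1) = (a % N + N * d) + N := by ring
    rw [this, pow_add, pow_mul, ← hK, FiniteField.pow_card, ih]

lemma pow_red' [NeZero N] (hK : Fintype.card K = q ^ N) (a : ℕ) (x : K) :
    x ^ q ^ a = x ^ q ^ (a : ZMod N).val := by
  rw [pow_red hK, ZMod.val_natCast]

/-- coefficient extraction, `ZMod N`-indexed -/
lemma zmod_coeff_ext [NeZero N] (hq : 2 ≤ q) (hK : Fintype.card K = q ^ N)
    (F G : ZMod N → K)
    (h : ∀ x : K, ∑ z : ZMod N, F z * x ^ q ^ z.val = ∑ z : ZMod N, G z * x ^ q ^ z.val) :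
    F = G := by
  classical
  have hN : 0 < N := Nat.pos_of_ne_zero (NeZero.ne N)
  set P : Polynomial K :=
    ∑ z : ZMod N, Polynomial.C (F z - G z) * Polynomial.X ^ q ^ z.val with hP
  have hev : ∀ x : K, P.eval x = 0 := by
    intro x
    rw [hP]
    simp only [Polynomial.eval_finset_sum, Polynomial.eval_mul, Polynomial.eval_C,
      Polynomial.eval_pow, Polynomial.eval_X, sub_mul]
    rw [Finset.sum_sub_distrib, h x, sub_self]
  have hP0 : P = 0 := by
    by_contra hne
    have hdeg : P.natDegree ≤ q ^ (N - 1) := by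
      apply Polynomial.natDegree_sum_le_of_forall_le
      intro z _
      apply le_trans (Polynomial.natDegree_C_mul_le _ _)
      simp only [Polynomial.natDegree_X_pow]
      exact Nat.pow_le_pow_right (by omega) (by have := z.val_lt; omega)
    have hcard := roots_card_aux P hne Finset.univ (fun x _ => hev x)
    rw [Finset.card_univ, hK] at hcard
    have : q ^ (N - 1) < q ^ N := Nat.pow_lt_pow_right (by omega) (by omega)
    omega
  funext z
  have hcoeff : P.coeff (q ^ z.val) = F z - G z := by
    rw [hP, Polynomial.finset_sum_coeff]
    rw [Finset.sum_eq_single z]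
    · rw [Polynomial.coeff_C_mul, Polynomial.coeff_X_pow, if_pos rfl, mul_one]
    · intro w _ hne
      rw [Polynomial.coeff_C_mul, Polynomial.coeff_X_pow, if_neg, mul_zero]
      intro hc
      exact hne (ZMod.val_injective N (Nat.pow_right_injective hq hc.symm))
    · simp
  have h0 : F z - G z = 0 := by rw [← hcoeff, hP0, Polynomial.coeff_zero]
  exact sub_eq_zero.mp h0

end
open Finset

section
variable {K : Type*} [Field K] [Fintype K] [DecidableEq K] {q n p e : ℕ}

/-- the subfield `F_{q^n}` inside `K = F_{q^{2n}}` has at least `q^n` elements. -/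
lemma subfield_card (hp : Fact p.Prime) [CharP K p] (hqe : q = p ^ e)
    (hq : 2 ≤ q) (hn : 0 < n) (hK : Fintype.card K = q ^ (2 * n)) :
    q ^ n ≤ (Finset.univ.filter (fun u : K => u ^ q ^ n = u)).card := by
  set Sf := Finset.univ.filter (fun u : K => u ^ q ^ n = u) with hSf
  set ψ : K → K := fun x => x ^ q ^ n - x with hψ
  have hqpow : ∀ m : ℕ, (q : ℕ) ^ m = p ^ (e * m) := by
    intro m; rw [hqe, ← pow_mul]
  have hadd : ∀ x y : K, ψ (x - y) = ψ x - ψ y := by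
    intro x y
    simp only [hψ]
    rw [hqpow n, sub_pow_char_pow]
    ring
  -- range of ψ is contained in roots of X^{q^n} + X
  have hrange : ∀ x : K, (ψ x) ^ q ^ n + ψ x = 0 := by
    intro x
    simp only [hψ]
    rw [hqpow n, sub_pow_char_pow, ← hqpow n, ← pow_mul, ← pow_add, ← two_mul, ← hK,
      FiniteField.pow_card]
    ring
  set Rf := Finset.univ.image ψ with hRf
  have hRcard : Rf.card ≤ q ^ n := by
    have : ∀ y ∈ Rf, (Polynomial.X ^ q ^ n + Polynomial.X : Polynomial K).eval y = 0 := by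
      intro y hy
      obtain ⟨x, _, rfl⟩ := Finset.mem_image.mp hy
      simpa using hrange x
    have hne : (Polynomial.X ^ q ^ n + Polynomial.X : Polynomial K) ≠ 0 := by
      intro hc
      have h1 : (Polynomial.X ^ q ^ n + Polynomial.X : Polynomial K).coeff (q ^ n) = 1 := by
        rw [Polynomial.coeff_add, Polynomial.coeff_X_pow, if_pos rfl, Polynomial.coeff_X,
          if_neg, add_zero]
        have : 2 ≤ q ^ n := le_trans hq (Nat.le_self_pow (by omega) q)
        omega
      rw [hc] at h1
      simp at h1
    have hdeg : (Polynomial.X ^ q ^ n + Polynomial.X : Polynomial K).natDegree ≤ q ^ n := by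
      apply le_trans (Polynomial.natDegree_add_le _ _)
      simp
      exact le_trans (Nat.one_le_two_pow) (Nat.pow_le_pow_left hq n) |>.trans le_rfl
    exact le_trans (roots_card_aux _ hne Rf this) hdeg
  -- fibers of ψ have size ≤ Sf.card
  have hfiber : ∀ y ∈ Rf, (Finset.univ.filter (fun x : K => ψ x = y)).card ≤ Sf.card := by
    intro y hy
    obtain ⟨x0, _, hx0⟩ := Finset.mem_image.mp hy
    apply Finset.card_le_card_of_injOn (fun x => x - x0)
    · intro x hx
      simp only [Finset.mem_coe, Finset.mem_filter, Finset.mem_univ, true_and] at hx ⊢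
      have h0 : ψ (x - x0) = 0 := by rw [hadd, hx, hx0, sub_self]
      rw [hSf, Finset.mem_filter]
      refine ⟨Finset.mem_univ _, ?_⟩
      have := sub_eq_zero.mp h0
      simpa [hψ] using this
    · intro a _ b _ hab
      simpa using congrArg (· + x0) hab
  have hcards : Fintype.card K ≤ Rf.card * Sf.card := by
    have h1 : (Finset.univ : Finset K).card = ∑ y ∈ Rf, (Finset.univ.filter (fun x : K => ψ x = y)).card :=
      Finset.card_eq_sum_card_fiberwise (fun x _ => Finset.mem_image_of_mem ψ (Finset.mem_univ x))
    rw [← Finset.card_univ, h1, ← smul_eq_mul]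
    exact Finset.sum_le_card_nsmul _ _ _ hfiber
  have h2 : q ^ (2 * n) ≤ q ^ n * Sf.card := by
    rw [← hK]
    exact le_trans hcards (Nat.mul_le_mul_right _ hRcard)
  rw [two_mul, pow_add] at h2
  exact Nat.le_of_mul_le_mul_left h2 (by positivity)
end
open Finset

section
variable {n : ℕ}

lemma modlem (hn : 0 < n) : ∀ v : ℕ, v < 2*n →
    ((v + n) % (2*n) = if v < n then v + n else v - n) := by
  intro v hv
  split
  · exact Nat.mod_eq_of_lt (by omega)
  · rw [Nat.mod_eq_sub_mod (by omega)]
    have : v + n - 2*n = v - n := by omega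
    rw [this, Nat.mod_eq_of_lt (by omega)]

lemma comb (hn : 2 ≤ n) {k : ℕ} (hk1 : 2 ≤ k) (hk2 : k ≤ 2*n - 2)
    (hkn : k ≠ n ∨ 3 ≤ n) (σ : ZMod (2*n)) (hσ : IsUnit σ)
    (A B : Set (ZMod (2*n))) (hA : A.Nonempty) (hB : B.Nonempty)
    (H1 : ∀ i : ℕ, 0 < i → i < k → ∀ a ∈ A, ∀ b ∈ B,
      (a + b + σ * (i : ZMod (2*n))).val ≤ k)
    (H2 : ∀ a ∈ A, ∀ b ∈ B, ¬ (a + b).val ≤ k →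
      ((a + (n : ZMod (2*n))) ∈ A ∧ (b + (n : ZMod (2*n))) ∈ B))
    (H3 : ∀ a ∈ A, ∀ b ∈ B, ¬ (a + b + σ * (k : ZMod (2*n))).val ≤ k →
      ((a + (n : ZMod (2*n))) ∈ A ∧ (b + (n : ZMod (2*n))) ∈ B)) :
    A.Subsingleton ∧ B.Subsingleton := by
  classical
  haveI : NeZero (2*n) := ⟨by omega⟩
  -- basic cast facts
  have nc : ∀ w : ZMod (2*n), ((w.val : ℕ) : ZMod (2*n)) = w :=
    fun w => ZMod.natCast_rightInverse w
  have castval : ∀ m : ℕ, m < 2*n → ((m : ZMod (2*n))).val = m :=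
    fun m hm => ZMod.val_cast_of_lt hm
  have castinj : ∀ i j : ℕ, i < 2*n → j < 2*n → ((i : ZMod (2*n)) = (j : ZMod (2*n))) → i = j := by
    intro i j hi hj h
    rw [← castval i hi, ← castval j hj, h]
  have valadd : ∀ (w : ZMod (2*n)) (m : ℕ), (w + (m : ZMod (2*n))).val = (w.val + m) % (2*n) := by
    intro w m
    conv_lhs => rw [← nc w, ← Nat.cast_add]
    rw [ZMod.val_natCast]
  have σcancel : ∀ x y : ZMod (2*n), σ * x = σ * y → x = y := fun x y h => hσ.mul_left_cancel h
  have two0 : ((2 : ℕ) : ZMod (2*n)) ≠ 0 := by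
    intro h
    have := castval 2 (by omega)
    rw [h, ZMod.val_zero] at this
    omega
  haveI : Fact (1 < 2*n) := ⟨by omega⟩
  have σne0 : σ ≠ 0 := by
    intro h
    have h10 : (1 : ZMod (2*n)) = 0 := σcancel 1 0 (by rw [h]; ring)
    exact one_ne_zero h10
  have hnn : (n : ZMod (2*n)) + (n : ZMod (2*n)) = 0 := by
    rw [← Nat.cast_add]
    have : n + n = 2*n := by omega
    rw [this, ZMod.natCast_self]
  have negn : -(n : ZMod (2*n)) = (n : ZMod (2*n)) := by
    rw [neg_eq_iff_add_eq_zero, hnn]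
  have σnen : σ ≠ (n : ZMod (2*n)) := by
    intro h
    apply two0
    apply σcancel
    rw [mul_zero, h, ← Nat.cast_mul]
    have : n * 2 = 2 * n := by ring
    rw [this, ZMod.natCast_self]
  have two_σ_ne : 3 ≤ n → 2 * σ ≠ (n : ZMod (2*n)) := by
    intro hn3 h
    -- 2 * σ.val ≡ n [MOD 2n]
    have hv : (2 * σ.val) % (2*n) = n := by
      have hcst : ((2 * σ.val : ℕ) : ZMod (2*n)) = (n : ZMod (2*n)) := by
        rw [Nat.cast_mul, Nat.cast_ofNat, nc σ, h]
      have h2' := congrArg ZMod.val hcst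
      rwa [ZMod.val_natCast, castval n (by omega)] at h2'
    obtain ⟨U, hU⟩ := hσ
    have hcop : Nat.Coprime (σ.val) (2*n) := by
      rw [← hU]; exact ZMod.val_coe_unit_coprime U
    have hdm := Nat.div_add_mod (2 * σ.val) (2*n)
    rw [hv] at hdm
    set j := 2 * σ.val / (2*n) with hj
    set M := n * j with hMdef
    have hM : 2 * M + n = 2 * σ.val := by rw [hMdef, ← hdm]; ring
    have heven : n % 2 = 0 := by omega
    set h2 := n / 2 with hh2
    have hn2 : n = 2 * h2 := by omega
    have hσv : σ.val = M + h2 := by omega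
    have hdvd1 : h2 ∣ σ.val := by
      rw [hσv, hMdef, hn2]
      exact ⟨2*j+1, by ring⟩
    have hdvd2 : h2 ∣ 2*n := ⟨4, by rw [hn2]; ring⟩
    have : h2 ∣ 1 := by
      rw [← hcop.gcd_eq_one]
      exact Nat.dvd_gcd hdvd1 hdvd2
    have : h2 = 1 := Nat.eq_one_of_dvd_one this
    omega
  -- Step 1: for every pair, the whole AP of length k+1 stays in the interval
  have step1 : ∀ a ∈ A, ∀ b ∈ B, (a + b).val ≤ k ∧ (a + b + σ * (k : ZMod (2*n))).val ≤ k := by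
    intro a ha b hb
    by_contra hcon
    have hshift : (a + (n : ZMod (2*n))) ∈ A ∧ (b + (n : ZMod (2*n))) ∈ B := by
      by_cases h0 : (a + b).val ≤ k
      · exact H3 a ha b hb (fun hq => hcon ⟨h0, hq⟩)
      · exact H2 a ha b hb h0
    set y := a + b with hy
    have hgood : ∀ i : ℕ, 0 < i → i < k →
        (y + σ * (i : ZMod (2*n))).val ≤ k ∧
        (((y + σ * (i : ZMod (2*n))).val + n) % (2*n)) ≤ k := by
      intro i hi1 hi2
      constructor
      · exact H1 i hi1 hi2 a ha b hb
      · have h2 := H1 i hi1 hi2 (a + (n : ZMod (2*n))) hshift.1 b hb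
        have : a + (n : ZMod (2*n)) + b + σ * (i : ZMod (2*n))
            = (y + σ * (i : ZMod (2*n))) + (n : ZMod (2*n)) := by rw [hy]; ring
        rw [this, valadd] at h2
        exact h2
    -- k ≥ n
    have hkgen : n ≤ k := by
      have h1 := hgood 1 (by omega) (by omega)
      have hv := (y + σ * ((1:ℕ) : ZMod (2*n))).val_lt
      rw [modlem (by omega) _ hv] at h1
      rcases h1 with ⟨ha1, hb1⟩
      by_cases hc : (y + σ * ((1:ℕ) : ZMod (2*n))).val < n
      · rw [if_pos hc] at hb1; omega
      · rw [if_neg hc] at hb1; omega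
    have twoσ0 : 2*σ ≠ 0 := by
      intro h
      apply two0
      rw [Nat.cast_ofNat]
      refine σcancel 2 0 ?_
      linear_combination h
    -- any element failing the goodness test is of the form y + σ * i with i outside (0,k)
    have memM : ∀ v : ZMod (2*n),
        ¬(v.val ≤ k ∧ ((v.val + n) % (2*n)) ≤ k) →
        ∃ i0 : ℕ, i0 < 2*n ∧ ¬(0 < i0 ∧ i0 < k) ∧ v = y + σ * (i0 : ZMod (2*n)) := by
      intro v hv
      obtain ⟨U, hU⟩ := hσ
      set ζ := (↑U⁻¹ : ZMod (2*n)) * (v - y) with hζ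
      have hveq : v = y + σ * ζ := by
        rw [hζ, ← hU, ← mul_assoc, ← Units.val_mul, mul_inv_cancel, Units.val_one, one_mul]
        ring
      refine ⟨ζ.val, ζ.val_lt, ?_, by rw [nc ζ]; exact hveq⟩
      rintro ⟨hi1, hi2⟩
      obtain ⟨g1, g2⟩ := hgood ζ.val hi1 hi2
      rw [nc ζ, ← hveq] at g1 g2
      exact hv ⟨g1, g2⟩
    -- the three regimes
    rcases (by omega : k ≤ 2*n - 4 ∨ k = 2*n - 3 ∨ k = 2*n - 2) with hreg | hreg | hreg
    · -- counting
      set W : Finset (ZMod (2*n)) :=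
        ((Finset.range (k - n + 1)) ∪ Finset.Icc n k).image (Nat.cast) with hW
      have hmaps : ∀ i ∈ Finset.Ioo 0 k, y + σ * (i : ZMod (2*n)) ∈ W := by
        intro i hi
        rw [Finset.mem_Ioo] at hi
        obtain ⟨h1, h2⟩ := hgood i hi.1 hi.2
        set w := y + σ * (i : ZMod (2*n)) with hw
        have hv := w.val_lt
        rw [modlem (by omega) _ hv] at h2
        rw [hW, Finset.mem_image]
        refine ⟨w.val, ?_, nc w⟩
        rw [Finset.mem_union, Finset.mem_range, Finset.mem_Icc]
        by_cases hc : w.val < n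
        · rw [if_pos hc] at h2; left; omega
        · rw [if_neg hc] at h2; right; omega
      have hinj : Set.InjOn (fun i : ℕ => y + σ * (i : ZMod (2*n))) (Finset.Ioo 0 k) := by
        intro i hi j hj hij
        simp only [Finset.coe_Ioo, Set.mem_Ioo] at hi hj
        have := σcancel _ _ (add_left_cancel hij)
        exact castinj i j (by omega) (by omega) this
      have hcard := Finset.card_le_card_of_injOn _ hmaps hinj
      have hWcard : W.card ≤ (k - n + 1) + (k - n + 1) := by
        apply le_trans (Finset.card_image_le)
        apply le_trans (Finset.card_union_le _ _)
        rw [Finset.card_range, Nat.card_Icc]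
        omega
      rw [Nat.card_Ioo] at hcard
      omega
    · -- k = 2n - 3
      have hn3 : 3 ≤ n := by omega
      have castneg : ∀ m : ℕ, 0 < m → m ≤ 2*n → ((2*n - m : ℕ) : ZMod (2*n)) = -(m : ZMod (2*n)) := by
        intro m hm1 hm2
        have h0 : ((2*n - m : ℕ) : ZMod (2*n)) + ((m:ℕ) : ZMod (2*n)) = 0 := by
          rw [← Nat.cast_add, show 2*n-m+m = 2*n by omega, ZMod.natCast_self]
        linear_combination h0
      have key4 : ∀ v : ZMod (2*n), ¬(v.val ≤ k ∧ ((v.val + n) % (2*n)) ≤ k) →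
          v = y ∨ v = y - σ ∨ v = y - 2*σ ∨ v = y - 3*σ := by
        intro v hv
        obtain ⟨i0, hi0lt, hi0out, hveq⟩ := memM v hv
        have hcases : i0 = 0 ∨ i0 = 2*n-1 ∨ i0 = 2*n-2 ∨ i0 = 2*n-3 := by omega
        rcases hcases with h | h | h | h
        · left; rw [hveq, h]; simp
        · right; left
          rw [hveq, h, castneg 1 (by omega) (by omega)]
          push_cast
          ring
        · right; right; left
          rw [hveq, h, castneg 2 (by omega) (by omega)]
          push_cast
          ring
        · right; right; right
          rw [hveq, h, castneg 3 (by omega) (by omega)]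
          push_cast
          ring
      -- the four bad elements
      set v1 : ZMod (2*n) := ((n-2 : ℕ) : ZMod (2*n)) with hv1
      set v2 : ZMod (2*n) := ((n-1 : ℕ) : ZMod (2*n)) with hv2
      set u1 : ZMod (2*n) := ((2*n-2 : ℕ) : ZMod (2*n)) with hu1
      set u2 : ZMod (2*n) := ((2*n-1 : ℕ) : ZMod (2*n)) with hu2
      have failgen : ∀ m : ℕ, m < 2*n → ¬(m ≤ k ∧ ((m + n) % (2*n)) ≤ k) →
          ¬(((m : ZMod (2*n))).val ≤ k ∧ ((((m : ZMod (2*n))).val + n) % (2*n)) ≤ k) := by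
        intro m hm h
        rwa [castval m hm]
      have fv1 := failgen (n-2) (by omega) (by
        rw [modlem (by omega) _ (by omega), if_pos (by omega)]
        omega)
      have fv2 := failgen (n-1) (by omega) (by
        rw [modlem (by omega) _ (by omega), if_pos (by omega)]
        omega)
      have fu1 := failgen (2*n-2) (by omega) (by
        rw [modlem (by omega) _ (by omega), if_neg (by omega)]
        omega)
      have fu2 := failgen (2*n-1) (by omega) (by
        rw [modlem (by omega) _ (by omega), if_neg (by omega)]
        omega)
      -- distinctness
      have dv : v1 ≠ v2 ∧ v1 ≠ u1 ∧ v1 ≠ u2 ∧ v2 ≠ u1 ∧ v2 ≠ u2 ∧ u1 ≠ u2 := by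
        refine ⟨?_, ?_, ?_, ?_, ?_, ?_⟩ <;>
          (intro h; have := castinj _ _ (by omega) (by omega) h; omega)
      set Vf : Finset (ZMod (2*n)) := {v1, v2, u1, u2} with hVf
      set Mf : Finset (ZMod (2*n)) := {y, y - σ, y - 2*σ, y - 3*σ} with hMf
      have hsub : Vf ⊆ Mf := by
        intro v hv
        rw [hVf, Finset.mem_insert, Finset.mem_insert, Finset.mem_insert,
          Finset.mem_singleton] at hv
        have : v = y ∨ v = y - σ ∨ v = y - 2*σ ∨ v = y - 3*σ := by
          rcases hv with h | h | h | h <;> subst h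
          · exact key4 _ fv1
          · exact key4 _ fv2
          · exact key4 _ fu1
          · exact key4 _ fu2
        rw [hMf]
        simp only [Finset.mem_insert, Finset.mem_singleton]
        exact this
      have hVcard : Vf.card = 4 := by
        rw [hVf]
        rw [Finset.card_insert_of_notMem (by
            simp only [Finset.mem_insert, Finset.mem_singleton]
            push_neg
            exact ⟨dv.1, dv.2.1, dv.2.2.1⟩),
          Finset.card_insert_of_notMem (by
            simp only [Finset.mem_insert, Finset.mem_singleton]
            push_neg
            exact ⟨dv.2.2.2.1, dv.2.2.2.2.1⟩),
          Finset.card_insert_of_notMem (by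
            simp only [Finset.mem_singleton]
            exact dv.2.2.2.2.2),
          Finset.card_singleton]
      have hMcard : Mf.card ≤ 4 := by
        rw [hMf]
        apply le_trans (Finset.card_insert_le _ _)
        have : ({y - σ, y - 2*σ, y - 3*σ} : Finset (ZMod (2*n))).card ≤ 3 := by
          apply le_trans (Finset.card_insert_le _ _)
          have : ({y - 2*σ, y - 3*σ} : Finset (ZMod (2*n))).card ≤ 2 := by
            apply le_trans (Finset.card_insert_le _ _)
            simp only [Finset.card_singleton]
            omega
          omega
        omega
      have hVM : Vf = Mf := Finset.eq_of_subset_of_card_le hsub (by omega)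
      -- the three chain elements
      have hx1 : y - 3*σ ∈ Vf := by
        rw [hVM, hMf, Finset.mem_insert, Finset.mem_insert, Finset.mem_insert,
          Finset.mem_singleton]
        exact Or.inr (Or.inr (Or.inr rfl))
      have hx2 : y - 2*σ ∈ Vf := by
        rw [hVM, hMf, Finset.mem_insert, Finset.mem_insert, Finset.mem_insert,
          Finset.mem_singleton]
        exact Or.inr (Or.inr (Or.inl rfl))
      have hx3 : y - σ ∈ Vf := by
        rw [hVM, hMf, Finset.mem_insert, Finset.mem_insert, Finset.mem_insert,
          Finset.mem_singleton]
        exact Or.inr (Or.inl rfl)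
      have hy0 : y ∈ Vf := by
        rw [hVM, hMf, Finset.mem_insert, Finset.mem_insert, Finset.mem_insert,
          Finset.mem_singleton]
        exact Or.inl rfl
      -- Vf is closed under +n
      have hv1u1 : v1 + (n : ZMod (2*n)) = u1 := by
        rw [hv1, hu1, ← Nat.cast_add, show n-2+n = 2*n-2 by omega]
      have hv2u2 : v2 + (n : ZMod (2*n)) = u2 := by
        rw [hv2, hu2, ← Nat.cast_add, show n-1+n = 2*n-1 by omega]
      have hu1v1 : u1 + (n : ZMod (2*n)) = v1 := by
        rw [← hv1u1, add_assoc, hnn, add_zero]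
      have hu2v2 : u2 + (n : ZMod (2*n)) = v2 := by
        rw [← hv2u2, add_assoc, hnn, add_zero]
      have hclose : ∀ w ∈ Vf, w + (n : ZMod (2*n)) ∈ Vf := by
        intro w hw
        rw [hVf, Finset.mem_insert, Finset.mem_insert, Finset.mem_insert,
          Finset.mem_singleton] at hw ⊢
        rcases hw with h | h | h | h <;> subst h
        · rw [hv1u1]; exact Or.inr (Or.inr (Or.inl rfl))
        · rw [hv2u2]; exact Or.inr (Or.inr (Or.inr rfl))
        · rw [hu1v1]; exact Or.inl rfl
        · rw [hu2v2]; exact Or.inr (Or.inl rfl)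
      -- distinctness of the chain
      have dch12 : y - 3*σ ≠ y - 2*σ := by
        intro h; exact σne0 (by linear_combination -h)
      have dch13 : y - 3*σ ≠ y - σ := by
        intro h; exact twoσ0 (by linear_combination -h)
      have dch23 : y - 2*σ ≠ y - σ := by
        intro h; exact σne0 (by linear_combination -h)
      -- the successor property
      have hP1 : (y - 3*σ) + σ ∈ Vf := by
        have : (y - 3*σ) + σ = y - 2*σ := by ring
        rw [this]; exact hx2
      have hP2 : (y - 2*σ) + σ ∈ Vf := by
        have : (y - 2*σ) + σ = y - σ := by ring
        rw [this]; exact hx3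
      have hP3 : (y - σ) + σ ∈ Vf := by
        have : (y - σ) + σ = y := by ring
        rw [this]; exact hy0
      have hPv : v1 + σ ∈ Vf ∧ v2 + σ ∈ Vf := by
        constructor
        · by_contra hnv1
          have hnu1 : ¬(u1 + σ ∈ Vf) := by
            intro hc
            apply hnv1
            have : v1 + σ = (u1 + σ) + (n : ZMod (2*n)) := by
              rw [← hu1v1]; ring
            rw [this]
            exact hclose _ hc
          -- each chain element is v2 or u2
          have helt : ∀ w : ZMod (2*n), w ∈ Vf → w + σ ∈ Vf → w = v2 ∨ w = u2 := by
            intro w hw hwp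
            rw [hVf, Finset.mem_insert, Finset.mem_insert, Finset.mem_insert,
              Finset.mem_singleton] at hw
            rcases hw with h | h | h | h
            · exact absurd (h ▸ hwp) hnv1
            · left; exact h
            · exact absurd (h ▸ hwp) hnu1
            · right; exact h
          have e1 := helt _ hx1 hP1
          have e2 := helt _ hx2 hP2
          have e3 := helt _ hx3 hP3
          rcases e1 with h1 | h1 <;> rcases e2 with h2 | h2 <;> rcases e3 with h3 | h3
          · exact dch12 (h1.trans h2.symm)
          · exact dch12 (h1.trans h2.symm)
          · exact dch13 (h1.trans h3.symm)
          · exact dch23 (h2.trans h3.symm)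
          · exact dch23 (h2.trans h3.symm)
          · exact dch13 (h1.trans h3.symm)
          · exact dch12 (h1.trans h2.symm)
          · exact dch12 (h1.trans h2.symm)
        · by_contra hnv2
          have hnu2 : ¬(u2 + σ ∈ Vf) := by
            intro hc
            apply hnv2
            have : v2 + σ = (u2 + σ) + (n : ZMod (2*n)) := by
              rw [← hu2v2]; ring
            rw [this]
            exact hclose _ hc
          have helt : ∀ w : ZMod (2*n), w ∈ Vf → w + σ ∈ Vf → w = v1 ∨ w = u1 := by
            intro w hw hwp
            rw [hVf, Finset.mem_insert, Finset.mem_insert, Finset.mem_insert,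
              Finset.mem_singleton] at hw
            rcases hw with h | h | h | h
            · left; exact h
            · exact absurd (h ▸ hwp) hnv2
            · right; exact h
            · exact absurd (h ▸ hwp) hnu2
          have e1 := helt _ hx1 hP1
          have e2 := helt _ hx2 hP2
          have e3 := helt _ hx3 hP3
          rcases e1 with h1 | h1 <;> rcases e2 with h2 | h2 <;> rcases e3 with h3 | h3
          · exact dch12 (h1.trans h2.symm)
          · exact dch12 (h1.trans h2.symm)
          · exact dch13 (h1.trans h3.symm)
          · exact dch23 (h2.trans h3.symm)
          · exact dch23 (h2.trans h3.symm)
          · exact dch13 (h1.trans h3.symm)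
          · exact dch12 (h1.trans h2.symm)
          · exact dch12 (h1.trans h2.symm)
      -- now extract σ equations
      have hv1v2 : v1 + 1 = v2 := by
        rw [hv1, hv2, ← Nat.cast_one, ← Nat.cast_add, show n-2+1 = n-1 by omega]
      have hσ1 : σ = 1 ∨ σ = 1 + (n : ZMod (2*n)) := by
        have h := hPv.1
        rw [hVf, Finset.mem_insert, Finset.mem_insert, Finset.mem_insert,
          Finset.mem_singleton] at h
        rcases h with h | h | h | h
        · exact absurd (by linear_combination h) σne0
        · left; linear_combination h - hv1v2
        · exact absurd (by linear_combination h - hv1u1) σnen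
        · right; linear_combination h - hv2u2 - hv1v2
      have hσ2 : σ = -1 ∨ σ = (n : ZMod (2*n)) - 1 := by
        have h := hPv.2
        rw [hVf, Finset.mem_insert, Finset.mem_insert, Finset.mem_insert,
          Finset.mem_singleton] at h
        rcases h with h | h | h | h
        · left; linear_combination h + hv1v2
        · exact absurd (by linear_combination h) σne0
        · right; linear_combination h - hv1u1 + hv1v2
        · exact absurd (by linear_combination h - hv2u2) σnen
      have hcast2 : ((2:ℕ) : ZMod (2*n)) = (2 : ZMod (2*n)) := by push_cast; ring
      rcases hσ1 with h1 | h1 <;> rcases hσ2 with h2 | h2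
      · apply two0
        rw [hcast2]
        linear_combination h2 - h1
      · -- 1 = n - 1, so n = 2
        have : ((n:ℕ) : ZMod (2*n)) = ((2:ℕ) : ZMod (2*n)) := by
          rw [hcast2]; linear_combination h1 - h2
        have := castinj n 2 (by omega) (by omega) this
        omega
      · -- 1 + n = -1 : n + 2 = 0
        have : ((n+2 : ℕ) : ZMod (2*n)) = ((0:ℕ) : ZMod (2*n)) := by
          push_cast
          linear_combination h2 - h1
        have := castinj (n+2) 0 (by omega) (by omega) this
        omega
      · apply two0
        rw [hcast2]
        linear_combination h2 - h1
    · -- k = 2n - 2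
      have hn3 : 3 ≤ n := by
        rcases hkn with h | h <;> omega
      have castneg : ∀ m : ℕ, 0 < m → m ≤ 2*n → ((2*n - m : ℕ) : ZMod (2*n)) = -(m : ZMod (2*n)) := by
        intro m hm1 hm2
        have h0 : ((2*n - m : ℕ) : ZMod (2*n)) + ((m:ℕ) : ZMod (2*n)) = 0 := by
          rw [← Nat.cast_add, show 2*n-m+m = 2*n by omega, ZMod.natCast_self]
        linear_combination h0
      have key3 : ∀ v : ZMod (2*n), ¬(v.val ≤ k ∧ ((v.val + n) % (2*n)) ≤ k) →
          v = y ∨ v = y - σ ∨ v = y - 2*σ := by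
        intro v hv
        obtain ⟨i0, hi0lt, hi0out, hveq⟩ := memM v hv
        have hcases : i0 = 0 ∨ i0 = 2*n-1 ∨ i0 = 2*n-2 := by omega
        rcases hcases with h | h | h
        · left; rw [hveq, h]; simp
        · right; left
          rw [hveq, h, castneg 1 (by omega) (by omega)]
          push_cast
          ring
        · right; right
          rw [hveq, h, castneg 2 (by omega) (by omega)]
          push_cast
          ring
      set v1 : ZMod (2*n) := ((n-1 : ℕ) : ZMod (2*n)) with hv1
      set u1 : ZMod (2*n) := ((2*n-1 : ℕ) : ZMod (2*n)) with hu1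
      have fv1 : ¬(v1.val ≤ k ∧ ((v1.val + n) % (2*n)) ≤ k) := by
        rw [hv1, castval _ (by omega), modlem (by omega) _ (by omega), if_pos (by omega)]
        omega
      have fu1 : ¬(u1.val ≤ k ∧ ((u1.val + n) % (2*n)) ≤ k) := by
        rw [hu1, castval _ (by omega)]
        omega
      have hv1u1 : v1 + (n : ZMod (2*n)) = u1 := by
        rw [hv1, hu1, ← Nat.cast_add, show n-1+n = 2*n-1 by omega]
      have dvu : v1 ≠ u1 := by
        intro h; have := castinj _ _ (by omega) (by omega) h; omega
      have m1 := key3 _ fv1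
      have m2 := key3 _ fu1
      -- u1 - v1 = n, and pairwise differences in {±σ, ±2σ}
      have hdiff : u1 = v1 + (n : ZMod (2*n)) := hv1u1.symm
      rcases m1 with h1 | h1 | h1 <;> rcases m2 with h2 | h2 | h2
      · exact dvu (h1.trans h2.symm)
      · exact σnen (by linear_combination -h1 + h2 + hv1u1 - hnn)
      · exact (two_σ_ne hn3) (by linear_combination -h1 + h2 + hv1u1 - hnn)
      · exact σnen (by linear_combination h1 - h2 - hv1u1)
      · exact dvu (h1.trans h2.symm)
      · exact σnen (by linear_combination -h1 + h2 + hv1u1 - hnn)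
      · exact (two_σ_ne hn3) (by linear_combination h1 - h2 - hv1u1)
      · exact σnen (by linear_combination h1 - h2 - hv1u1)
      · exact dvu (h1.trans h2.symm)
  -- full AP containment
  have key : ∀ a ∈ A, ∀ b ∈ B, ∀ i : ℕ, i ≤ k → (a + b + σ * (i : ZMod (2*n))).val ≤ k := by
    intro a ha b hb i hik
    rcases Nat.lt_or_ge 0 i with hi0 | hi0
    · rcases Nat.lt_or_ge i k with hik' | hik'
      · exact H1 i hi0 hik' a ha b hb
      · have : i = k := by omega
        subst this
        exact (step1 a ha b hb).2
    · have : i = 0 := by omega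
      subst this
      have := (step1 a ha b hb).1
      simpa using this
  -- Step 2 : uniqueness of the sum
  set Jf : Finset (ZMod (2*n)) := (Finset.range (k+1)).image (Nat.cast) with hJf
  have memJf : ∀ w : ZMod (2*n), w ∈ Jf ↔ w.val ≤ k := by
    intro w
    rw [hJf, Finset.mem_image]
    constructor
    · rintro ⟨j, hj, rfl⟩
      rw [Finset.mem_range] at hj
      rw [castval j (by omega)]
      omega
    · intro hw
      exact ⟨w.val, Finset.mem_range.mpr (by omega), nc w⟩
  have imageEq : ∀ y : ZMod (2*n), (∀ i : ℕ, i ≤ k → (y + σ * (i : ZMod (2*n))).val ≤ k) →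
      (Finset.range (k+1)).image (fun i : ℕ => y + σ * (i : ZMod (2*n))) = Jf := by
    intro y hy
    apply Finset.eq_of_subset_of_card_le
    · intro w hw
      rw [Finset.mem_image] at hw
      obtain ⟨i, hi, rfl⟩ := hw
      rw [Finset.mem_range] at hi
      exact (memJf _).mpr (hy i (by omega))
    · have h1 : Jf.card ≤ k + 1 := le_trans (Finset.card_image_le) (by rw [Finset.card_range])
      have h2 : ((Finset.range (k+1)).image (fun i : ℕ => y + σ * (i : ZMod (2*n)))).card = k+1 := by
        rw [Finset.card_image_of_injOn, Finset.card_range]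
        intro i hi j hj hij
        simp only [Finset.coe_range, Set.mem_Iio] at hi hj
        have := σcancel _ _ (add_left_cancel hij)
        exact castinj i j (by omega) (by omega) this
      omega
  have yuniq : ∀ y y' : ZMod (2*n),
      (∀ i : ℕ, i ≤ k → (y + σ * (i : ZMod (2*n))).val ≤ k) →
      (∀ i : ℕ, i ≤ k → (y' + σ * (i : ZMod (2*n))).val ≤ k) → y = y' := by
    intro y y' hy hy'
    have him := imageEq y hy
    have him' := imageEq y' hy'
    set δ := y' - y with hδ
    have htrans : Finset.image (fun w => δ + w) Jf = Jf := by
      conv_lhs => rw [← him]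
      rw [Finset.image_image, ← him']
      apply Finset.image_congr
      intro i _
      simp only [Function.comp_apply]
      rw [hδ]
      ring
    have hk2n : k + 1 < 2*n := by omega
    have hmem1 : δ + (k : ZMod (2*n)) ∈ Jf := by
      rw [← htrans, Finset.mem_image]
      exact ⟨(k : ZMod (2*n)), (memJf _).mpr (by rw [castval k (by omega)]), rfl⟩
    have hval : (δ + (k : ZMod (2*n))).val ≤ k := (memJf _).mp hmem1
    have hfin : (δ + (k : ZMod (2*n))).val = k := by
      by_contra hne
      have hlt : (δ + (k : ZMod (2*n))).val < k := by omega
      set r := (δ + (k : ZMod (2*n))).val with hr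
      have hstep : δ + ((k+1 : ℕ) : ZMod (2*n)) = ((r+1 : ℕ) : ZMod (2*n)) := by
        have h0 : δ + ((k : ℕ) : ZMod (2*n)) = ((r : ℕ) : ZMod (2*n)) := by
          rw [hr, nc]
        push_cast
        push_cast at h0
        linear_combination h0
      have hin : δ + ((k+1 : ℕ) : ZMod (2*n)) ∈ Jf := by
        rw [hstep]
        apply (memJf _).mpr
        rw [castval (r+1) (by omega)]
        omega
      rw [← htrans, Finset.mem_image] at hin
      obtain ⟨w, hw, hweq⟩ := hin
      have : w = ((k+1 : ℕ) : ZMod (2*n)) := add_left_cancel hweq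
      subst this
      have := (memJf _).mp hw
      rw [castval (k+1) (by omega)] at this
      omega
    have : δ + (k : ZMod (2*n)) = (k : ZMod (2*n)) := by
      rw [← nc (δ + (k : ZMod (2*n))), hfin]
    have hδ0 : δ = 0 := by linear_combination this
    rw [hδ] at hδ0
    linear_combination -hδ0
  -- Step 3: conclude
  obtain ⟨a0, ha0⟩ := hA
  obtain ⟨b0, hb0⟩ := hB
  constructor
  · intro x hx x' hx'
    have h1 := yuniq (x + b0) (x' + b0) (key x hx b0 hb0) (key x' hx' b0 hb0)
    exact add_right_cancel h1
  · intro x hx x' hx'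
    have h1 := yuniq (a0 + x) (a0 + x') (key a0 ha0 x hx) (key a0 ha0 x' hx')
    exact add_left_cancel h1
end
open Finset

section
variable {K : Type*} [Field K] [Fintype K] {q n p e : ℕ}

lemma expand_lemma [NeZero (2*n)] (hp : Fact p.Prime) [CharP K p] (hqe : q = p ^ e)
    (hK : Fintype.card K = q ^ (2*n))
    (D E : ZMod (2*n) → K) (φ₁ φ₂ : K → K)
    (hφ₁ : φ₁ = fun x => ∑ z : ZMod (2*n), D z * x ^ q ^ z.val)
    (hφ₂ : φ₂ = fun x => ∑ z : ZMod (2*n), E z * x ^ q ^ z.val)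
    (u x : K) (j : ℕ) :
    φ₁ (u * (φ₂ x) ^ q ^ j) =
      ∑ z : ZMod (2*n), (∑ l : ZMod (2*n),
        D l * u ^ q ^ l.val * (E (z - l - (j : ZMod (2*n)))) ^ q ^ (j + l.val)) * x ^ q ^ z.val := by
  classical
  have nc : ∀ w : ZMod (2*n), ((w.val : ℕ) : ZMod (2*n)) = w :=
    fun w => ZMod.natCast_rightInverse w
  have qpow : ∀ (y : K) (m : ℕ), y ^ q ^ m = y ^ p ^ (e*m) := by
    intro y m; rw [hqe, ← pow_mul]
  have sumpow : ∀ (m : ℕ) (f : ZMod (2*n) → K),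
      (∑ w : ZMod (2*n), f w) ^ q ^ m = ∑ w : ZMod (2*n), (f w) ^ q ^ m := by
    intro m f
    have h := map_sum (iterateFrobenius K p (e*m)) f Finset.univ
    simp only [iterateFrobenius_def] at h
    simp only [qpow]
    exact h
  rw [hφ₁, hφ₂]
  simp only []
  have hinner : (u * (∑ m : ZMod (2*n), E m * x ^ q ^ m.val) ^ q ^ j)
      = ∑ m : ZMod (2*n), u * ((E m) ^ q ^ j * x ^ q ^ (m.val + j)) := by
    rw [sumpow j, Finset.mul_sum]
    apply Finset.sum_congr rfl
    intro m _
    rw [mul_pow, ← pow_mul, ← pow_add]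
  rw [hinner]
  have houter : ∀ l : ZMod (2*n),
      (∑ m : ZMod (2*n), u * ((E m) ^ q ^ j * x ^ q ^ (m.val + j))) ^ q ^ l.val
      = ∑ m : ZMod (2*n), u ^ q ^ l.val * ((E m) ^ q ^ (j + l.val) * x ^ q ^ (m.val + j + l.val)) := by
    intro l
    rw [sumpow]
    apply Finset.sum_congr rfl
    intro m _
    rw [mul_pow, mul_pow, ← pow_mul, ← pow_mul, ← pow_add, ← pow_add]
  have hmain : ∀ l : ZMod (2*n),
      D l * (∑ m : ZMod (2*n), u * ((E m) ^ q ^ j * x ^ q ^ (m.val + j))) ^ q ^ l.val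
      = ∑ z : ZMod (2*n),
          D l * u ^ q ^ l.val * (E (z - l - (j : ZMod (2*n)))) ^ q ^ (j + l.val) * x ^ q ^ z.val := by
    intro l
    rw [houter l, Finset.mul_sum]
    have hred : ∀ m : ZMod (2*n),
        (x : K) ^ q ^ (m.val + j + l.val) = x ^ q ^ ((m + (j : ZMod (2*n)) + l).val) := by
      intro m
      rw [pow_red hK]
      have : ((m.val + j + l.val : ℕ) : ZMod (2*n)) = m + (j : ZMod (2*n)) + l := by
        push_cast
        rw [nc, nc]
      rw [← this, ZMod.val_natCast]
    apply Fintype.sum_equiv (Equiv.addRight ((j : ZMod (2*n)) + l))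
    intro m
    simp only [Equiv.coe_addRight]
    have h1 : (m + ((j : ZMod (2*n)) + l)) - l - (j : ZMod (2*n)) = m := by ring
    have h2 : m + ((j : ZMod (2*n)) + l) = m + (j : ZMod (2*n)) + l := by ring
    rw [h1, h2, ← hred m]
    ring
  calc (∑ l : ZMod (2*n), D l * (∑ m : ZMod (2*n), u * ((E m) ^ q ^ j * x ^ q ^ (m.val + j))) ^ q ^ l.val)
      = ∑ l : ZMod (2*n), ∑ z : ZMod (2*n),
          D l * u ^ q ^ l.val * (E (z - l - (j : ZMod (2*n)))) ^ q ^ (j + l.val) * x ^ q ^ z.val := by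
        apply Finset.sum_congr rfl
        intro l _
        exact hmain l
    _ = ∑ z : ZMod (2*n), (∑ l : ZMod (2*n),
          D l * u ^ q ^ l.val * (E (z - l - (j : ZMod (2*n)))) ^ q ^ (j + l.val)) * x ^ q ^ z.val := by
        rw [Finset.sum_comm]
        apply Finset.sum_congr rfl
        intro z _
        rw [Finset.sum_mul]
end

/-- If `(φ₁, φ₂, ρ)` is an equivalence map between `D_{k,s}(γ)` and `D_{k,t}(θ)`
with `1 < k < 2n-1` and (`k ≠ n` or `n ≥ 3`), then `φ₁` and `φ₂` are monomials,
i.e. `φ₁ = d X^{q^l}` and `φ₂ = g X^{q^j}` with `d, g ≠ 0`. -/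
theorem equivalence_maps_are_monomials (q s t n k : ℕ) (hn : 0 < n)
    (hs : Nat.Coprime s (2 * n)) (ht : Nat.Coprime t (2 * n))
    (hk1 : 1 < k) (hk2 : k < 2 * n - 1) (hkn : k ≠ n ∨ 3 ≤ n)
    (K : Type*) [Field K] [Fintype K] (hK : Fintype.card K = q ^ (2 * n))
    (γ θ : K)
    (hγ : ¬ ∃ z : K, z ^ q = z ∧ z ^ 2 = γ ^ (∑ i ∈ Finset.range (2 * n), q ^ i))
    (hθ : ¬ ∃ z : K, z ^ q = z ∧ z ^ 2 = θ ^ (∑ i ∈ Finset.range (2 * n), q ^ i))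
    (φ₁ φ₂ : K → K) (ρ : K ≃+* K)
    (h₁ : IsLinPoly q (2 * n) φ₁) (h₁b : Function.Bijective φ₁)
    (h₂ : IsLinPoly q (2 * n) φ₂) (h₂b : Function.Bijective φ₂)
    (heq : ∀ f ∈ DFun q s n k γ,
      (φ₁ ∘ (⇑ρ ∘ f ∘ ⇑ρ.symm) ∘ φ₂) ∈ DFun q t n k θ) :
    (∃ (d : K) (l : ℕ), d ≠ 0 ∧ φ₁ = fun x => d * x ^ q ^ l) ∧
    (∃ (g : K) (j : ℕ), g ≠ 0 ∧ φ₂ = fun x => g * x ^ q ^ j) := by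
  classical
  have hn2 : 2 ≤ n := by omega
  haveI : NeZero (2*n) := ⟨by omega⟩
  -- q is at least 2
  have hq2 : 2 ≤ q := by
    by_contra h
    have hcard : 1 < Fintype.card K := Fintype.one_lt_card
    interval_cases q <;> simp_all <;> omega
  -- q is a power of the characteristic
  set p := ringChar K with hpdef
  haveI : CharP K p := ringChar.charP K
  obtain ⟨m, hpp, hcard⟩ := FiniteField.card K p
  haveI hpfact : Fact p.Prime := ⟨hpp⟩
  have hqpp : ∃ e : ℕ, q = p ^ e := by
    have hdvd : q ∣ p ^ (m : ℕ) := by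
      rw [← hcard, hK]
      exact dvd_pow_self q (by omega)
    obtain ⟨i, _, hi⟩ := (Nat.dvd_prime_pow hpp).mp hdvd
    exact ⟨i, hi⟩
  obtain ⟨e, hqe⟩ := hqpp
  -- reindex the linearized coefficients over ZMod (2n)
  obtain ⟨d, hd⟩ := h₁
  obtain ⟨g, hg⟩ := h₂
  have nc : ∀ w : ZMod (2*n), ((w.val : ℕ) : ZMod (2*n)) = w :=
    fun w => ZMod.natCast_rightInverse w
  set efz : Fin (2*n) ≃ ZMod (2*n) :=
    { toFun := fun i => ((i : ℕ) : ZMod (2*n)),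
      invFun := fun z => ⟨z.val, z.val_lt⟩,
      left_inv := by
        intro i
        ext
        exact ZMod.val_cast_of_lt i.isLt,
      right_inv := by
        intro z
        exact nc z } with hefz
  set D : ZMod (2*n) → K := fun z => d ⟨z.val, z.val_lt⟩ with hD
  set E : ZMod (2*n) → K := fun z => g ⟨z.val, z.val_lt⟩ with hE
  have hφ₁' : φ₁ = fun x => ∑ z : ZMod (2*n), D z * x ^ q ^ z.val := by
    rw [hd]
    funext x
    apply Fintype.sum_equiv efz
    intro i
    have hv : (efz i).val = (i : ℕ) := ZMod.val_cast_of_lt i.isLt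
    have h1 : d ⟨(efz i).val, (efz i).val_lt⟩ = d i := congrArg d (Fin.ext hv)
    rw [hD]
    simp only []
    rw [h1, hv]
  have hφ₂' : φ₂ = fun x => ∑ z : ZMod (2*n), E z * x ^ q ^ z.val := by
    rw [hg]
    funext x
    apply Fintype.sum_equiv efz
    intro i
    have hv : (efz i).val = (i : ℕ) := ZMod.val_cast_of_lt i.isLt
    have h1 : g ⟨(efz i).val, (efz i).val_lt⟩ = g i := congrArg g (Fin.ext hv)
    rw [hE]
    simp only []
    rw [h1, hv]
  -- nonzero supports
  have hDne : ∃ z, D z ≠ 0 := by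
    by_contra h
    push_neg at h
    have h0 : φ₁ 1 = φ₁ 0 := by
      rw [hφ₁']
      simp [h]
    have := h₁b.1 h0
    exact one_ne_zero this
  have hEne : ∃ z, E z ≠ 0 := by
    by_contra h
    push_neg at h
    have h0 : φ₂ 1 = φ₂ 0 := by
      rw [hφ₂']
      simp [h]
    have := h₂b.1 h0
    exact one_ne_zero this
  -- γ is nonzero
  have hγ0 : γ ≠ 0 := by
    rintro rfl
    apply hγ
    refine ⟨0, ?_, ?_⟩
    · exact zero_pow (by omega)
    · rw [zero_pow (by norm_num)]
      rw [zero_pow ?_]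
      have : 0 < ∑ i ∈ Finset.range (2 * n), q ^ i :=
        Finset.sum_pos (fun i _ => pow_pos (by omega) i)
          (Finset.nonempty_range_iff.mpr (by omega))
      omega
  -- the target support set
  set T : Finset (ZMod (2*n)) :=
    (Finset.range (k+1)).image (fun j : ℕ => ((t*j : ℕ) : ZMod (2*n))) with hT
  -- representation of elements of the target code
  have targetform : ∀ F : K → K, F ∈ DFun q t n k θ → ∃ gc : ZMod (2*n) → K,
      (∀ z ∉ T, gc z = 0) ∧
      F = fun x => ∑ z : ZMod (2*n), gc z * x ^ q ^ z.val := by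
    rintro F ⟨a', b', _, _, c', rfl⟩
    refine ⟨fun z => (if z = 0 then a' else 0) +
      (∑ j ∈ (Finset.Ioo 0 k).filter (fun j => ((t*j : ℕ) : ZMod (2*n)) = z), c' j) +
      (if z = ((t*k : ℕ) : ZMod (2*n)) then θ*b' else 0), ?_, ?_⟩
    · intro z hz
      have h0 : z ≠ 0 := by
        intro h
        apply hz
        rw [hT, Finset.mem_image]
        exact ⟨0, Finset.mem_range.mpr (by omega), by rw [h]; simp⟩
      have hkk : z ≠ ((t*k : ℕ) : ZMod (2*n)) := by
        intro h
        apply hz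
        rw [hT, Finset.mem_image]
        exact ⟨k, Finset.mem_range.mpr (by omega), h.symm⟩
      have hflt : (Finset.Ioo 0 k).filter (fun j => ((t*j : ℕ) : ZMod (2*n)) = z) = ∅ := by
        rw [Finset.filter_eq_empty_iff]
        intro j hj hc
        apply hz
        rw [Finset.mem_Ioo] at hj
        rw [hT, Finset.mem_image]
        exact ⟨j, Finset.mem_range.mpr (by omega), hc⟩
      show (if z = 0 then a' else 0) +
        (∑ j ∈ (Finset.Ioo 0 k).filter (fun j => ((t*j : ℕ) : ZMod (2*n)) = z), c' j) +
        (if z = ((t*k : ℕ) : ZMod (2*n)) then θ*b' else 0) = 0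
      rw [hflt, if_neg h0, if_neg hkk]
      simp
    · funext x
      simp only [add_mul, Finset.sum_add_distrib]
      have t1 : ∑ z : ZMod (2*n), (if z = 0 then a' else 0) * x ^ q ^ z.val = a' * x := by
        rw [Finset.sum_eq_single (0 : ZMod (2*n))]
        · rw [if_pos rfl, ZMod.val_zero, pow_zero, pow_one]
        · intro w _ hw
          rw [if_neg hw, zero_mul]
        · intro h
          exact absurd (Finset.mem_univ _) h
      have t3 : ∑ z : ZMod (2*n), (if z = ((t*k : ℕ) : ZMod (2*n)) then θ*b' else 0) * x ^ q ^ z.val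
          = θ * b' * x ^ q ^ (t*k) := by
        rw [Finset.sum_eq_single (((t*k : ℕ) : ZMod (2*n)))]
        · rw [if_pos rfl, ← pow_red' hK]
        · intro w _ hw
          rw [if_neg hw, zero_mul]
        · intro h
          exact absurd (Finset.mem_univ _) h
      have t2 : ∑ z : ZMod (2*n),
          (∑ j ∈ (Finset.Ioo 0 k).filter (fun j => ((t*j : ℕ) : ZMod (2*n)) = z), c' j) * x ^ q ^ z.val
          = ∑ j ∈ Finset.Ioo 0 k, c' j * x ^ q ^ (t*j) := by
        have step : ∀ z : ZMod (2*n),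
            (∑ j ∈ (Finset.Ioo 0 k).filter (fun j => ((t*j : ℕ) : ZMod (2*n)) = z), c' j) * x ^ q ^ z.val
            = ∑ j ∈ (Finset.Ioo 0 k).filter (fun j => ((t*j : ℕ) : ZMod (2*n)) = z),
                c' j * x ^ q ^ (t*j) := by
          intro z
          rw [Finset.sum_mul]
          apply Finset.sum_congr rfl
          intro j hj
          rw [Finset.mem_filter] at hj
          rw [pow_red' hK (t*j), hj.2]
        rw [Finset.sum_congr rfl (fun z _ => step z)]
        exact Finset.sum_fiberwise _ _ _
      rw [t1, t2, t3]
  -- generic coefficient identity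
  have coeffID : ∀ (w : K) (jj : ℕ),
      ((fun x : K => φ₁ (w * (φ₂ x) ^ q ^ jj)) ∈ DFun q t n k θ) →
      ∀ z ∉ T, ∑ l : ZMod (2*n),
        D l * w ^ q ^ l.val * (E (z - l - ((jj : ℕ) : ZMod (2*n)))) ^ q ^ (jj + l.val) = 0 := by
    intro w jj hmem z hz
    obtain ⟨gc, hg0, hgf⟩ := targetform _ hmem
    have hext : (fun z : ZMod (2*n) => ∑ l : ZMod (2*n),
        D l * w ^ q ^ l.val * (E (z - l - ((jj : ℕ) : ZMod (2*n)))) ^ q ^ (jj + l.val)) = gc := by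
      apply zmod_coeff_ext hq2 hK
      intro x
      rw [← expand_lemma hpfact hqe hK D E φ₁ φ₂ hφ₁' hφ₂' w x jj]
      exact congrFun hgf x
    calc ∑ l : ZMod (2*n),
        D l * w ^ q ^ l.val * (E (z - l - ((jj : ℕ) : ZMod (2*n)))) ^ q ^ (jj + l.val)
        = gc z := congrFun hext z
      _ = 0 := hg0 z hz
  -- Fact 1 : full-strength constraints from the middle monomials
  have fact1 : ∀ i : ℕ, 0 < i → i < k → ∀ a b : ZMod (2*n), D a ≠ 0 → E b ≠ 0 →
      (a + b + ((s*i : ℕ) : ZMod (2*n))) ∈ T := by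
    intro i hi1 hi2 a b hDa hEb
    by_contra hz
    set z : ZMod (2*n) := a + b + ((s*i : ℕ) : ZMod (2*n)) with hzdef
    have hrow : ∀ w : K, ∑ l : ZMod (2*n),
        (D l * (E (z - l - ((s*i : ℕ) : ZMod (2*n)))) ^ q ^ (s*i + l.val)) * w ^ q ^ l.val = 0 := by
      intro w
      have hf : (fun x : K => (ρ.symm w) * x ^ q ^ (s*i)) ∈ DFun q s n k γ := by
        refine ⟨0, 0, zero_pow (pow_pos (by omega : 0 < q) n).ne', zero_pow (pow_pos (by omega : 0 < q) n).ne',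
          fun j => if j = i then ρ.symm w else 0, ?_⟩
        funext x
        simp only [zero_mul, mul_zero, zero_add, add_zero]
        rw [Finset.sum_eq_single i]
        · rw [if_pos rfl]
        · intro j _ hji
          rw [if_neg hji, zero_mul]
        · intro h
          exact absurd (Finset.mem_Ioo.mpr ⟨hi1, hi2⟩) h
      have hmem0 := heq _ hf
      have hcomp : (φ₁ ∘ (⇑ρ ∘ (fun x : K => (ρ.symm w) * x ^ q ^ (s*i)) ∘ ⇑ρ.symm) ∘ φ₂)
          = fun x => φ₁ (w * (φ₂ x) ^ q ^ (s*i)) := by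
        funext x
        simp only [Function.comp_apply]
        rw [map_mul, map_pow, RingEquiv.apply_symm_apply, RingEquiv.apply_symm_apply]
      rw [hcomp] at hmem0
      have hres := coeffID w (s*i) hmem0 z hz
      rw [← hres]
      apply Finset.sum_congr rfl
      intro l _
      ring
    have hcext := zmod_coeff_ext hq2 hK
      (fun l => D l * (E (z - l - ((s*i : ℕ) : ZMod (2*n)))) ^ q ^ (s*i + l.val)) 0
      (fun x => by
        rw [hrow x]
        simp)
    have hrowa := congrFun hcext a
    simp only [Pi.zero_apply] at hrowa
    have hidx : z - a - ((s*i : ℕ) : ZMod (2*n)) = b := by rw [hzdef]; ring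
    rw [hidx] at hrowa
    rcases mul_eq_zero.mp hrowa with h | h
    · exact hDa h
    · exact hEb (pow_eq_zero_iff (pow_pos (by omega : 0 < q) _).ne' |>.mp h)
  -- the subfield F_{q^n}
  set Sf : Finset K := Finset.univ.filter (fun u0 : K => u0 ^ q ^ n = u0) with hSf
  have hScard : q ^ n ≤ Sf.card := subfield_card hpfact hqe hq2 (by omega) hK
  have hnn : (n : ZMod (2*n)) + (n : ZMod (2*n)) = 0 := by
    rw [← Nat.cast_add]
    have h2 : n + n = 2*n := by omega
    rw [h2, ZMod.natCast_self]
  -- vanishing on the subfield gives pair relations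
  have pairvanish : ∀ β : ZMod (2*n) → K,
      (∀ u0 ∈ Sf, ∑ l : ZMod (2*n), β l * u0 ^ q ^ l.val = 0) →
      ∀ l : ZMod (2*n), β l + β (l + (n : ZMod (2*n))) = 0 := by
    intro β hv
    have huniv : (Finset.range (2*n)).image (Nat.cast : ℕ → ZMod (2*n)) = Finset.univ := by
      apply Finset.eq_univ_of_card
      rw [Finset.card_image_of_injOn, Finset.card_range, ZMod.card]
      intro i hi j hj hij
      simp only [Finset.coe_range, Set.mem_Iio] at hi hj
      rw [← ZMod.val_cast_of_lt hi, ← ZMod.val_cast_of_lt hj, hij]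
    have hzr : ∀ u0 : K, ∑ l : ZMod (2*n), β l * u0 ^ q ^ l.val
        = ∑ jr ∈ Finset.range (2*n), β (jr : ZMod (2*n)) * u0 ^ q ^ jr := by
      intro u0
      rw [← huniv, Finset.sum_image (by
        intro i hi j hj hij
        rw [Finset.mem_coe, Finset.mem_range] at hi hj
        rw [← ZMod.val_cast_of_lt hi, ← ZMod.val_cast_of_lt hj, hij])]
      apply Finset.sum_congr rfl
      intro jr hjr
      rw [Finset.mem_range] at hjr
      rw [ZMod.val_cast_of_lt hjr]
    have hcoeffs := linpoly_zero_of_vanish hq2 (by omega : 0 < n) Sf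
      (lt_of_lt_of_le (Nat.pow_lt_pow_right (by omega) (by omega)) hScard)
      (fun lam => β ((lam : ℕ) : ZMod (2*n)) + β ((n + lam : ℕ) : ZMod (2*n)))
      (by
        intro u0 hu0
        have hu : u0 ^ q ^ n = u0 := (Finset.mem_filter.mp hu0).2
        have h1 := hv u0 hu0
        rw [hzr] at h1
        rw [show Finset.range (2*n) = Finset.range (n+n) from by rw [two_mul]] at h1
        rw [Finset.sum_range_add] at h1
        have h2 : ∀ lam ∈ Finset.range n,
            β ((n + lam : ℕ) : ZMod (2*n)) * u0 ^ q ^ (n + lam)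
            = β ((n + lam : ℕ) : ZMod (2*n)) * u0 ^ q ^ lam := by
          intro lam _
          rw [pow_add, pow_mul, hu]
        rw [Finset.sum_congr rfl h2] at h1
        show ∑ lam ∈ Finset.range n,
          (β ((lam : ℕ) : ZMod (2*n)) + β ((n + lam : ℕ) : ZMod (2*n))) * u0 ^ q ^ lam = 0
        simp only [add_mul]
        rw [Finset.sum_add_distrib]
        exact h1)
    intro l
    rcases Nat.lt_or_ge l.val n with hl | hl
    · have hc : β ((l.val : ℕ) : ZMod (2*n)) + β ((n + l.val : ℕ) : ZMod (2*n)) = 0 :=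
        hcoeffs l.val hl
      rw [nc l] at hc
      have e2 : ((n + l.val : ℕ) : ZMod (2*n)) = l + (n : ZMod (2*n)) := by
        push_cast
        rw [nc l]
        ring
      rw [e2] at hc
      exact hc
    · have hl' : l.val - n < n := by have := l.val_lt; omega
      have hc : β ((l.val - n : ℕ) : ZMod (2*n)) + β ((n + (l.val - n) : ℕ) : ZMod (2*n)) = 0 :=
        hcoeffs (l.val - n) hl'
      have e1 : ((l.val - n : ℕ) : ZMod (2*n)) = l + (n : ZMod (2*n)) := by
        have e0 : ((l.val - n : ℕ) : ZMod (2*n)) + ((n : ℕ) : ZMod (2*n)) = l := by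
          rw [← Nat.cast_add, show l.val - n + n = l.val by omega, nc l]
        linear_combination e0 - hnn
      have e2 : ((n + (l.val - n) : ℕ) : ZMod (2*n)) = l := by
        rw [show n + (l.val - n) = l.val by omega, nc l]
      rw [e1, e2] at hc
      rw [add_comm] at hc
      exact hc
  -- Fact 2 : weak constraints from the identity component
  have fact2 : ∀ a b : ZMod (2*n), D a ≠ 0 → E b ≠ 0 → (a + b) ∉ T →
      (D (a + (n : ZMod (2*n))) ≠ 0 ∧ E (b + (n : ZMod (2*n))) ≠ 0) := by
    intro a b hDa hEb hz
    set z : ZMod (2*n) := a + b with hzdef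
    set β : ZMod (2*n) → K :=
      fun l => D l * (E (z - l - ((0 : ℕ) : ZMod (2*n)))) ^ q ^ (0 + l.val) with hβ
    have hv : ∀ u0 ∈ Sf, ∑ l : ZMod (2*n), β l * u0 ^ q ^ l.val = 0 := by
      intro u0 hu0
      have hu : u0 ^ q ^ n = u0 := (Finset.mem_filter.mp hu0).2
      have hf : (fun x : K => (ρ.symm u0) * x) ∈ DFun q s n k γ := by
        refine ⟨ρ.symm u0, 0, ?_, zero_pow (pow_pos (by omega : 0 < q) n).ne', 0, ?_⟩
        · rw [← map_pow, hu]
        · funext x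
          simp
      have hmem0 := heq _ hf
      have hcomp : (φ₁ ∘ (⇑ρ ∘ (fun x : K => (ρ.symm u0) * x) ∘ ⇑ρ.symm) ∘ φ₂)
          = fun x => φ₁ (u0 * (φ₂ x) ^ q ^ (0 : ℕ)) := by
        funext x
        simp only [Function.comp_apply, pow_zero, pow_one]
        rw [map_mul, RingEquiv.apply_symm_apply, RingEquiv.apply_symm_apply]
      rw [hcomp] at hmem0
      have hres := coeffID u0 0 hmem0 z hz
      rw [← hres]
      apply Finset.sum_congr rfl
      intro l _
      rw [hβ]
      ring
    have hpair := pairvanish β hv a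
    have hidxa : z - a - ((0 : ℕ) : ZMod (2*n)) = b := by
      rw [hzdef]; push_cast; ring
    have hidxan : z - (a + (n : ZMod (2*n))) - ((0 : ℕ) : ZMod (2*n)) = b + (n : ZMod (2*n)) := by
      rw [hzdef]; push_cast; linear_combination (-1 : ZMod (2*n)) * hnn
    have hβa : β a = D a * (E b) ^ q ^ (0 + a.val) := by
      show D a * (E (z - a - ((0 : ℕ) : ZMod (2*n)))) ^ q ^ (0 + a.val) = _
      rw [hidxa]
    have hβan : β (a + (n : ZMod (2*n)))
        = D (a + (n : ZMod (2*n))) * (E (b + (n : ZMod (2*n)))) ^ q ^ (0 + (a + (n : ZMod (2*n))).val) := by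
      show D (a + (n : ZMod (2*n))) * (E (z - (a + (n : ZMod (2*n))) - ((0 : ℕ) : ZMod (2*n)))) ^ q ^ (0 + (a + (n : ZMod (2*n))).val) = _
      rw [hidxan]
    have hβane : β (a + (n : ZMod (2*n))) ≠ 0 := by
      intro hc
      rw [hc, add_zero] at hpair
      rw [hβa] at hpair
      rcases mul_eq_zero.mp hpair with h | h
      · exact hDa h
      · exact hEb (pow_eq_zero_iff (pow_pos (by omega : 0 < q) _).ne' |>.mp h)
    rw [hβan] at hβane
    constructor
    · intro hc; exact hβane (by rw [hc, zero_mul])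
    · intro hc; exact hβane (by rw [hc, zero_pow (pow_pos (by omega : 0 < q) _).ne', mul_zero])
  -- Fact 3 : weak constraints from the top component
  have fact3 : ∀ a b : ZMod (2*n), D a ≠ 0 → E b ≠ 0 →
      (a + b + ((s*k : ℕ) : ZMod (2*n))) ∉ T →
      (D (a + (n : ZMod (2*n))) ≠ 0 ∧ E (b + (n : ZMod (2*n))) ≠ 0) := by
    intro a b hDa hEb hz
    set z : ZMod (2*n) := a + b + ((s*k : ℕ) : ZMod (2*n)) with hzdef
    have hργ : ρ γ ≠ 0 := by
      intro h
      exact hγ0 (by simpa using ρ.injective (h.trans (map_zero ρ).symm))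
    set β : ZMod (2*n) → K :=
      fun l => D l * (ρ γ) ^ q ^ l.val * (E (z - l - ((s*k : ℕ) : ZMod (2*n)))) ^ q ^ (s*k + l.val) with hβ
    have hv : ∀ u0 ∈ Sf, ∑ l : ZMod (2*n), β l * u0 ^ q ^ l.val = 0 := by
      intro u0 hu0
      have hu : u0 ^ q ^ n = u0 := (Finset.mem_filter.mp hu0).2
      have hf : (fun x : K => γ * (ρ.symm u0) * x ^ q ^ (s*k)) ∈ DFun q s n k γ := by
        refine ⟨0, ρ.symm u0, zero_pow (pow_pos (by omega : 0 < q) n).ne', ?_, 0, ?_⟩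
        · rw [← map_pow, hu]
        · funext x
          simp
      have hmem0 := heq _ hf
      have hcomp : (φ₁ ∘ (⇑ρ ∘ (fun x : K => γ * (ρ.symm u0) * x ^ q ^ (s*k)) ∘ ⇑ρ.symm) ∘ φ₂)
          = fun x => φ₁ ((ρ γ * u0) * (φ₂ x) ^ q ^ (s*k)) := by
        funext x
        simp only [Function.comp_apply]
        rw [map_mul, map_mul, map_pow, RingEquiv.apply_symm_apply, RingEquiv.apply_symm_apply]
      rw [hcomp] at hmem0
      have hres := coeffID (ρ γ * u0) (s*k) hmem0 z hz
      rw [← hres]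
      apply Finset.sum_congr rfl
      intro l _
      rw [hβ, mul_pow]
      ring
    have hpair := pairvanish β hv a
    have hidxa : z - a - ((s*k : ℕ) : ZMod (2*n)) = b := by
      rw [hzdef]; ring
    have hidxan : z - (a + (n : ZMod (2*n))) - ((s*k : ℕ) : ZMod (2*n)) = b + (n : ZMod (2*n)) := by
      rw [hzdef]; linear_combination (-1 : ZMod (2*n)) * hnn
    have hβa : β a = D a * (ρ γ) ^ q ^ a.val * (E b) ^ q ^ (s*k + a.val) := by
      show D a * (ρ γ) ^ q ^ a.val * (E (z - a - ((s*k : ℕ) : ZMod (2*n)))) ^ q ^ (s*k + a.val) = _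
      rw [hidxa]
    have hβan : β (a + (n : ZMod (2*n)))
        = D (a + (n : ZMod (2*n))) * (ρ γ) ^ q ^ (a + (n : ZMod (2*n))).val
          * (E (b + (n : ZMod (2*n)))) ^ q ^ (s*k + (a + (n : ZMod (2*n))).val) := by
      show D (a + (n : ZMod (2*n))) * (ρ γ) ^ q ^ (a + (n : ZMod (2*n))).val * (E (z - (a + (n : ZMod (2*n))) - ((s*k : ℕ) : ZMod (2*n)))) ^ q ^ (s*k + (a + (n : ZMod (2*n))).val) = _
      rw [hidxan]
    have hβane : β (a + (n : ZMod (2*n))) ≠ 0 := by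
      intro hc
      rw [hc, add_zero] at hpair
      rw [hβa] at hpair
      rcases mul_eq_zero.mp hpair with h | h
      · rcases mul_eq_zero.mp h with h' | h'
        · exact hDa h'
        · exact hργ (pow_eq_zero_iff (pow_pos (by omega : 0 < q) _).ne' |>.mp h')
      · exact hEb (pow_eq_zero_iff (pow_pos (by omega : 0 < q) _).ne' |>.mp h)
    rw [hβan] at hβane
    constructor
    · intro hc; exact hβane (by rw [hc, zero_mul, zero_mul])
    · intro hc; exact hβane (by rw [hc, zero_pow (pow_pos (by omega : 0 < q) _).ne', mul_zero])
  -- rescale by the inverse of t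
  set Ut : (ZMod (2*n))ˣ := ZMod.unitOfCoprime t ht with hUt
  set τ : ZMod (2*n) := ((Ut⁻¹ : (ZMod (2*n))ˣ) : ZMod (2*n)) with hτ
  have hτt : τ * ((t : ℕ) : ZMod (2*n)) = 1 := by
    rw [hτ, ← ZMod.coe_unitOfCoprime t ht, ← hUt, ← Units.val_mul, inv_mul_cancel, Units.val_one]
  have τunit : IsUnit τ := (Ut⁻¹).isUnit
  have τcancel : ∀ x y : ZMod (2*n), τ * x = τ * y → x = y :=
    fun x y h => τunit.mul_left_cancel h
  have memT_iff : ∀ z : ZMod (2*n), z ∈ T ↔ (τ * z).val ≤ k := by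
    intro z
    constructor
    · intro hz
      rw [hT, Finset.mem_image] at hz
      obtain ⟨j, hj, rfl⟩ := hz
      rw [Finset.mem_range] at hj
      have : τ * ((t*j : ℕ) : ZMod (2*n)) = ((j : ℕ) : ZMod (2*n)) := by
        push_cast
        rw [← mul_assoc, hτt, one_mul]
      rw [this, ZMod.val_cast_of_lt (by omega)]
      omega
    · intro hz
      rw [hT, Finset.mem_image]
      refine ⟨(τ * z).val, Finset.mem_range.mpr (by omega), ?_⟩
      have h1 : ((t * (τ*z).val : ℕ) : ZMod (2*n)) = ((t:ℕ) : ZMod (2*n)) * (τ * z) := by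
        push_cast
        rw [nc (τ * z)]
      rw [h1, ← mul_assoc, mul_comm ((t:ℕ) : ZMod (2*n)) τ, hτt, one_mul]
  -- τ * n = n
  have τn : τ * ((n : ℕ) : ZMod (2*n)) = ((n : ℕ) : ZMod (2*n)) := by
    have hco : Nat.Coprime τ.val (2*n) := by
      rw [hτ]
      exact ZMod.val_coe_unit_coprime (Ut⁻¹)
    have hodd : ¬ (2 ∣ τ.val) := by
      intro hdvd
      have h2 : (2 : ℕ) ∣ Nat.gcd τ.val (2*n) := Nat.dvd_gcd hdvd ⟨n, rfl⟩
      rw [hco.gcd_eq_one] at h2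
      omega
    obtain ⟨c, hc⟩ : ∃ c, τ.val = 2*c + 1 := ⟨τ.val / 2, by omega⟩
    have hτval : τ = ((τ.val : ℕ) : ZMod (2*n)) := (nc τ).symm
    rw [hτval, ← Nat.cast_mul, hc, show (2*c+1)*n = c*(2*n) + n by ring, Nat.cast_add,
      Nat.cast_mul, ZMod.natCast_self, mul_zero, zero_add]
  -- the supports
  set Aset : Set (ZMod (2*n)) := {z : ZMod (2*n) | D z ≠ 0} with hAset
  set Bset : Set (ZMod (2*n)) := {z : ZMod (2*n) | E z ≠ 0} with hBset
  set A' : Set (ZMod (2*n)) := (fun z => τ * z) '' Aset with hA'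
  set B' : Set (ZMod (2*n)) := (fun z => τ * z) '' Bset with hB'
  set σ : ZMod (2*n) := τ * ((s : ℕ) : ZMod (2*n)) with hσdef
  have hσu : IsUnit σ := by
    rw [hσdef]
    exact τunit.mul ⟨ZMod.unitOfCoprime s hs, ZMod.coe_unitOfCoprime s hs⟩
  have hsub := comb hn2 (by omega : 2 ≤ k) (by omega : k ≤ 2*n - 2) hkn σ hσu A' B'
    (by
      obtain ⟨z1, hz1⟩ := hDne
      exact ⟨τ * z1, ⟨z1, hz1, rfl⟩⟩)
    (by
      obtain ⟨z2, hz2⟩ := hEne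
      exact ⟨τ * z2, ⟨z2, hz2, rfl⟩⟩)
    (by
      intro i hi1 hi2 a' ha' b' hb'
      obtain ⟨a, ha, rfl⟩ := ha'
      obtain ⟨b, hb, rfl⟩ := hb'
      have hT1 := fact1 i hi1 hi2 a b ha hb
      rw [memT_iff] at hT1
      have heqn : τ * a + τ * b + σ * ((i : ℕ) : ZMod (2*n))
          = τ * (a + b + ((s*i : ℕ) : ZMod (2*n))) := by
        rw [hσdef]
        push_cast
        ring
      rw [heqn]
      exact hT1)
    (by
      intro a' ha' b' hb' hbad
      obtain ⟨a, ha, rfl⟩ := ha'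
      obtain ⟨b, hb, rfl⟩ := hb'
      have heqn : τ * a + τ * b = τ * (a + b) := by ring
      rw [heqn] at hbad
      have hnotT : (a + b) ∉ T := fun hmem => hbad ((memT_iff _).mp hmem)
      obtain ⟨hDan, hEbn⟩ := fact2 a b ha hb hnotT
      constructor
      · refine ⟨a + ((n:ℕ) : ZMod (2*n)), hDan, ?_⟩
        show τ * (a + ((n:ℕ) : ZMod (2*n))) = τ * a + ((n:ℕ) : ZMod (2*n))
        rw [mul_add, τn]
      · refine ⟨b + ((n:ℕ) : ZMod (2*n)), hEbn, ?_⟩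
        show τ * (b + ((n:ℕ) : ZMod (2*n))) = τ * b + ((n:ℕ) : ZMod (2*n))
        rw [mul_add, τn])
    (by
      intro a' ha' b' hb' hbad
      obtain ⟨a, ha, rfl⟩ := ha'
      obtain ⟨b, hb, rfl⟩ := hb'
      have heqn : τ * a + τ * b + σ * ((k : ℕ) : ZMod (2*n))
          = τ * (a + b + ((s*k : ℕ) : ZMod (2*n))) := by
        rw [hσdef]
        push_cast
        ring
      rw [heqn] at hbad
      have hnotT : (a + b + ((s*k : ℕ) : ZMod (2*n))) ∉ T :=
        fun hmem => hbad ((memT_iff _).mp hmem)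
      obtain ⟨hDan, hEbn⟩ := fact3 a b ha hb hnotT
      constructor
      · refine ⟨a + ((n:ℕ) : ZMod (2*n)), hDan, ?_⟩
        show τ * (a + ((n:ℕ) : ZMod (2*n))) = τ * a + ((n:ℕ) : ZMod (2*n))
        rw [mul_add, τn]
      · refine ⟨b + ((n:ℕ) : ZMod (2*n)), hEbn, ?_⟩
        show τ * (b + ((n:ℕ) : ZMod (2*n))) = τ * b + ((n:ℕ) : ZMod (2*n))
        rw [mul_add, τn])
  -- supports are singletons
  have hAsing : ∀ z1 ∈ Aset, ∀ z2 ∈ Aset, z1 = z2 := by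
    intro z1 h1 z2 h2
    exact τcancel _ _ (hsub.1 ⟨z1, h1, rfl⟩ ⟨z2, h2, rfl⟩)
  have hBsing : ∀ z1 ∈ Bset, ∀ z2 ∈ Bset, z1 = z2 := by
    intro z1 h1 z2 h2
    exact τcancel _ _ (hsub.2 ⟨z1, h1, rfl⟩ ⟨z2, h2, rfl⟩)
  -- conclude
  obtain ⟨z1, hz1⟩ := hDne
  obtain ⟨z2, hz2⟩ := hEne
  constructor
  · refine ⟨D z1, z1.val, hz1, ?_⟩
    rw [hφ₁']
    funext x
    rw [Finset.sum_eq_single z1]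
    · intro w _ hw
      have : D w = 0 := by
        by_contra hww
        exact hw (hAsing w hww z1 hz1)
      rw [this, zero_mul]
    · intro h
      exact absurd (Finset.mem_univ _) h
  · refine ⟨E z2, z2.val, hz2, ?_⟩
    rw [hφ₂']
    funext x
    rw [Finset.sum_eq_single z2]
    · intro w _ hw
      have : E w = 0 := by
        by_contra hww
        exact hw (hBsing w hww z2 hz2)
      rw [this, zero_mul]
    · intro h
      exact absurd (Finset.mem_univ _) h
end

section
/- Let n = 2, gcd(s,4)=1, and let η ∈ F_{q^4}^* with N_{q^4/q}(η) ≠ 1. If c, d ∈ F_{q^4} satisfy η c^{q^2} = d and η d^{q^2} = c with (c,d) ≠ (0,0), then η^{q^2+1} = 1 and hence N_{q^4/q}(η) = (η·η^{q^2})^{1+q} = 1, a contradiction; therefore no such nonzero pair (c,d) exists. -/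
/-- Key computation for `n = 2`: if `η ∈ F_{q^4}*` with `N_{q^4/q}(η) ≠ 1`, there is
no pair `(c,d) ≠ (0,0)` in `F_{q^4}` with `η c^{q^2} = d` and `η d^{q^2} = c`
(otherwise `η^{q^2+1} = 1`, whence `N_{q^4/q}(η) = (η·η^{q^2})^{1+q} = 1`). -/
theorem no_nonzero_pair (q s : ℕ) (hs : Nat.Coprime s 4)
    (K : Type*) [Field K] [Fintype K] (hK : Fintype.card K = q ^ 4)
    (η : K) (hη0 : η ≠ 0) (hηN : η ^ (1 + q + q ^ 2 + q ^ 3) ≠ 1)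
    (c d : K) (h1 : η * c ^ q ^ 2 = d) (h2 : η * d ^ q ^ 2 = c)
    (hcd : ¬(c = 0 ∧ d = 0)) : False := by
  have hq : q ≠ 0 := by
    rintro rfl
    simp at hK
  have hc : c ≠ 0 := by
    rintro rfl
    rw [zero_pow (pow_ne_zero 2 hq), mul_zero] at h1
    exact hcd ⟨rfl, h1.symm⟩
  have hc4 : c ^ q ^ 4 = c := by
    rw [← hK]; exact FiniteField.pow_card c
  have key : η ^ (1 + q ^ 2) * c = c := by
    have : η * (η * c ^ q ^ 2) ^ q ^ 2 = c := by rw [h1, h2]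
    calc η ^ (1 + q ^ 2) * c = η * (η * c ^ q ^ 2) ^ q ^ 2 := by
          rw [mul_pow, ← pow_mul, show q ^ 2 * q ^ 2 = q ^ 4 by ring, hc4]; ring
      _ = c := this
  have hη1 : η ^ (1 + q ^ 2) = 1 := by
    have := mul_right_cancel₀ hc (key.trans (one_mul c).symm)
    exact this
  apply hηN
  have : (1 + q + q ^ 2 + q ^ 3) = (1 + q ^ 2) * (1 + q) := by ring
  rw [this, pow_mul, hη1, one_pow]
end

section
/- Let gcd(s,m)=1, 1 ≤ k ≤ m−1, and η ∈ F_{q^m} with N_{q^m/q}(η) ≠ (−1)^{km}. Then the twisted Gabidulin code H_{k,s}(η,h) = { a_0 x + a_1 x^{q^s} + ... + a_{k−1} x^{q^{s(k−1)}} + η a_0^{q^h} x^{q^{sk}} : a_0,...,a_{k−1} ∈ F_{q^m} } is an MRD code: it has q^{km} elements and every nonzero element has at most q^{k−1} roots in F_{q^m}. -/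
open Finset

open scoped Classical

section TwistedGabidulinAux

variable {q s m : ℕ} {K : Type*} [Field K] [Fintype K]

private lemma tg_pow_card (hK : Fintype.card K = q ^ m) (x : K) : x ^ q ^ m = x := by
  have h := FiniteField.pow_card x
  rwa [hK] at h

private lemma tg_pow_shift {b : ℕ} (x : K) (hb : x ^ q ^ b = x) :
    ∀ t c : ℕ, x ^ q ^ (c + t * b) = x ^ q ^ c := by
  intro t
  induction t with
  | zero => intro c; simp
  | succ t ih =>
    intro c
    have h1 : c + (t + 1) * b = (c + t * b) + b := by ring
    rw [h1, pow_add, mul_comm, pow_mul, hb]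
    exact ih c

private lemma tg_pow_gcd (x : K) :
    ∀ a b : ℕ, x ^ q ^ a = x → x ^ q ^ b = x → x ^ q ^ Nat.gcd a b = x := by
  intro a b
  induction a, b using Nat.gcd.induction with
  | H0 n => intro _ h; simpa using h
  | H1 a b ha ih =>
    intro h1 h2
    rw [Nat.gcd_rec]
    refine ih ?_ h1
    have hmod : b % a + a * (b / a) = b := Nat.mod_add_div b a
    have hsh := tg_pow_shift x h1 (b / a) (b % a)
    rw [mul_comm (b / a) a, hmod] at hsh
    rw [← hsh]; exact h2

private lemma tg_fix_q (hK : Fintype.card K = q ^ m) (hs : Nat.Coprime s m)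
    {x : K} (hx : x ^ q ^ s = x) : x ^ q = x := by
  have h := tg_pow_gcd x s m hx (tg_pow_card hK x)
  rwa [hs.gcd_eq_one, pow_one] at h

private lemma tg_ker_card [DecidableEq K] (hq : 2 ≤ q) (hK : Fintype.card K = q ^ m)
    (hs : Nat.Coprime s m) :
    (univ.filter fun x : K => x ^ q ^ s = x).card ≤ q := by
  classical
  set P : Polynomial K := Polynomial.X ^ q - Polynomial.X with hP
  have hdx : (Polynomial.X : Polynomial K).natDegree < (Polynomial.X ^ q : Polynomial K).natDegree := by
    rw [Polynomial.natDegree_X, Polynomial.natDegree_X_pow]; omega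
  have hdeg : P.natDegree = q := by
    rw [hP, Polynomial.natDegree_sub_eq_left_of_natDegree_lt hdx, Polynomial.natDegree_X_pow]
  have hP0 : P ≠ 0 := by
    intro hz
    rw [hz] at hdeg
    simp at hdeg
    omega
  have hsub : (univ.filter fun x : K => x ^ q ^ s = x) ⊆ P.roots.toFinset := by
    intro x hx
    rw [mem_filter] at hx
    have hxq : x ^ q = x := tg_fix_q hK hs hx.2
    rw [Multiset.mem_toFinset, Polynomial.mem_roots']
    refine ⟨hP0, ?_⟩
    simp [hP, Polynomial.IsRoot, hxq]
  calc (univ.filter fun x : K => x ^ q ^ s = x).card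
      ≤ P.roots.toFinset.card := Finset.card_le_card hsub
    _ ≤ Multiset.card P.roots := Multiset.toFinset_card_le _
    _ ≤ P.natDegree := Polynomial.card_roots' P
    _ = q := hdeg

private lemma tg_abel (g A : ℕ → K) :
    ∀ n : ℕ, ∑ i ∈ range (n + 1), g i * A i
      = (∑ i ∈ range (n + 1), g i) * A n
        - ∑ j ∈ range n, (∑ i ∈ range (j + 1), g i) * (A (j + 1) - A j) := by
  intro n
  induction n with
  | zero => simp
  | succ n ih =>
    rw [sum_range_succ (fun i => g i * A i), ih,
      sum_range_succ (fun j => (∑ i ∈ range (j + 1), g i) * (A (j + 1) - A j)),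
      sum_range_succ (fun i => g i) (n + 1)]
    simp only [Finset.sum_range_succ]
    ring

private lemma tg_step (p e : ℕ) [hp : Fact p.Prime] [CharP K p] (he : q = p ^ e)
    (d : ℕ) (c : Fin (d + 2) → K) (u : K) (hu : u ≠ 0)
    (hru : ∑ i, c i * u ^ q ^ (s * (i : ℕ)) = 0) :
    ∃ Q : Fin (d + 1) → K,
      Q (Fin.last d) = c (Fin.last (d + 1)) * u ^ q ^ (s * (d + 1)) ∧
      Q 0 = -(c 0 * u) ∧
      (Q = 0 → c = 0) ∧
      ∀ x : K, ∑ i, c i * (u * x) ^ q ^ (s * (i : ℕ))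
        = ∑ j : Fin (d + 1), Q j * (x ^ q ^ s - x) ^ q ^ (s * (j : ℕ)) := by
  classical
  set g : ℕ → K := fun i => if hi : i < d + 2 then c ⟨i, hi⟩ * u ^ q ^ (s * i) else 0 with hg
  have hgval : ∀ (i : ℕ) (hi : i < d + 2), g i = c ⟨i, hi⟩ * u ^ q ^ (s * i) := by
    intro i hi; rw [hg]; simp [hi]
  have hgsum : ∑ i ∈ range (d + 2), g i = 0 := by
    rw [← Fin.sum_univ_eq_sum_range (fun i => g i) (d + 2), ← hru]
    refine Finset.sum_congr rfl fun i _ => ?_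
    rw [hgval i.1 i.isLt]
  set T : ℕ → K := fun j => ∑ i ∈ range (j + 1), g i with hT
  have hTsucc : ∀ j : ℕ, T (j + 1) = T j + g (j + 1) := fun j => Finset.sum_range_succ g (j + 1)
  have hTtop : T (d + 1) = 0 := hgsum
  refine ⟨fun j => -(T j.1), ?_, ?_, ?_, ?_⟩
  · -- last value
    have h1 := hTsucc d
    rw [hTtop] at h1
    have h2 : -(T d) = g (d + 1) := by linear_combination h1
    show -(T d) = c (Fin.last (d + 1)) * u ^ q ^ (s * (d + 1))
    rw [h2, hgval (d + 1) (by omega)]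
    rfl
  · -- zero value
    have h0 : T 0 = g 0 := by simp [hT]
    have hgz : g 0 = c 0 * u := by
      rw [hgval 0 (by omega)]
      norm_num
    show -(T ((0 : Fin (d + 1)) : ℕ)) = -(c 0 * u)
    rw [Fin.val_zero, h0, hgz]
  · -- Q = 0 → c = 0
    intro hQ0
    have hTz : ∀ j, j ≤ d + 1 → T j = 0 := by
      intro j hj
      rcases Nat.lt_or_ge j (d + 1) with hlt | hge
      · have := congrFun hQ0 ⟨j, hlt⟩
        simpa [neg_eq_zero] using this
      · have : j = d + 1 := le_antisymm hj hge
        rw [this]; exact hTtop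
    have hgz : ∀ i, i ≤ d + 1 → g i = 0 := by
      intro i hi
      cases i with
      | zero =>
        have := hTz 0 (by omega)
        rw [hT] at this
        simpa [Finset.sum_range_one] using this
      | succ j =>
        have h1 := hTz (j + 1) hi
        have h2 := hTz j (by omega)
        have h3 := hTsucc j
        rw [h1, h2] at h3
        linear_combination -h3
    funext i
    have := hgz i.1 (by omega)
    rw [hgval i.1 i.isLt] at this
    rcases mul_eq_zero.mp this with h | h
    · simpa using h
    · exact absurd h (pow_ne_zero _ hu)
  · -- the functional identity
    intro x
    have hsubpow : ∀ j : ℕ, (x ^ q ^ s - x) ^ q ^ (s * j)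
        = x ^ q ^ (s * (j + 1)) - x ^ q ^ (s * j) := by
      intro j
      have h1 : q ^ (s * j) = p ^ (e * (s * j)) := by rw [he, ← pow_mul]
      rw [h1, sub_pow_char_pow, ← h1]
      congr 1
      rw [← pow_mul, ← pow_add]
      congr 1
      ring
    have hstep1 : ∑ i : Fin (d + 2), c i * (u * x) ^ q ^ (s * (i : ℕ))
        = ∑ i ∈ range (d + 2), g i * x ^ q ^ (s * i) := by
      rw [← Fin.sum_univ_eq_sum_range (fun i => g i * x ^ q ^ (s * i)) (d + 2)]
      refine Finset.sum_congr rfl fun i _ => ?_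
      rw [hgval i.1 i.isLt, mul_pow]
      have : (⟨i.1, i.isLt⟩ : Fin (d + 2)) = i := rfl
      rw [this]
      ring
    rw [hstep1, tg_abel g (fun i => x ^ q ^ (s * i)) (d + 1), hgsum, zero_mul, zero_sub,
      ← Finset.sum_neg_distrib,
      ← Fin.sum_univ_eq_sum_range
        (fun j => -((∑ i ∈ range (j + 1), g i) * (x ^ q ^ (s * (j + 1)) - x ^ q ^ (s * j)))) (d + 1)]
    refine Finset.sum_congr rfl fun j _ => ?_
    rw [hsubpow j.1]
    ring

private lemma tg_cardStep (hq : 2 ≤ q) (hK : Fintype.card K = q ^ m) (hs : Nat.Coprime s m)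
    (p e : ℕ) [hp : Fact p.Prime] [CharP K p] (he : q = p ^ e)
    (d : ℕ) (c : Fin (d + 2) → K) (u : K) (hu : u ≠ 0)
    (hru : ∑ i, c i * u ^ q ^ (s * (i : ℕ)) = 0) :
    ∃ Q : Fin (d + 1) → K,
      Q (Fin.last d) = c (Fin.last (d + 1)) * u ^ q ^ (s * (d + 1)) ∧
      Q 0 = -(c 0 * u) ∧
      (Q = 0 → c = 0) ∧
      (univ.filter fun x : K => ∑ i, c i * x ^ q ^ (s * (i : ℕ)) = 0).card
        ≤ q * (univ.filter fun x : K => ∑ j, Q j * x ^ q ^ (s * (j : ℕ)) = 0).card := by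
  classical
  obtain ⟨Q, hQl, hQ0, hQz, hid⟩ := tg_step p e he d c u hu hru
  refine ⟨Q, hQl, hQ0, hQz, ?_⟩
  set W : Finset K := univ.filter fun x : K => ∑ i, c i * (u * x) ^ q ^ (s * (i : ℕ)) = 0 with hW
  have hbij : (univ.filter fun x : K => ∑ i, c i * x ^ q ^ (s * (i : ℕ)) = 0).card = W.card := by
    refine Finset.card_bij' (fun x _ => u⁻¹ * x) (fun x _ => u * x) ?_ ?_ ?_ ?_
    · intro a ha
      rw [mem_filter] at ha ⊢
      refine ⟨mem_univ _, ?_⟩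
      rw [mul_inv_cancel_left₀ hu]
      exact ha.2
    · intro a ha
      rw [mem_filter] at ha ⊢
      exact ⟨mem_univ _, ha.2⟩
    · intro a _; exact mul_inv_cancel_left₀ hu a
    · intro a _; exact inv_mul_cancel_left₀ hu a
  set ψ : K → K := fun x => x ^ q ^ s - x with hψ
  have himg : W.image ψ ⊆ univ.filter fun y : K => ∑ j, Q j * y ^ q ^ (s * (j : ℕ)) = 0 := by
    intro y hy
    obtain ⟨x, hx, rfl⟩ := mem_image.mp hy
    rw [mem_filter] at hx ⊢
    exact ⟨mem_univ _, by rw [← hid x]; exact hx.2⟩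
  have hfib : ∀ b ∈ W.image ψ, (W.filter fun x => ψ x = b).card ≤ q := by
    intro b hb
    obtain ⟨a, haW, hab⟩ := mem_image.mp hb
    refine le_trans (Finset.card_le_card_of_injOn (fun x => x - a) ?_ ?_)
      (tg_ker_card hq hK hs)
    · intro x hx
      rw [Finset.mem_coe, mem_filter] at hx
      have h1 : x ^ q ^ s - x = b := hx.2
      have h2 : a ^ q ^ s - a = b := hab
      rw [Finset.mem_coe, mem_filter]
      refine ⟨mem_univ _, ?_⟩
      have h3 : q ^ s = p ^ (e * s) := by rw [he, ← pow_mul]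
      rw [h3, sub_pow_char_pow, ← h3]
      linear_combination h1 - h2
    · intro x _ y _ hxy
      have := congrArg (· + a) hxy
      simpa using this
  have hcount := Finset.card_le_mul_card_image (s := W) (f := ψ) q hfib
  calc (univ.filter fun x : K => ∑ i, c i * x ^ q ^ (s * (i : ℕ)) = 0).card
      = W.card := hbij
    _ ≤ q * (W.image ψ).card := hcount
    _ ≤ q * (univ.filter fun y : K => ∑ j, Q j * y ^ q ^ (s * (j : ℕ)) = 0).card :=
        Nat.mul_le_mul_left q (Finset.card_le_card himg)

private lemma tg_rootBound (hq : 2 ≤ q) (hK : Fintype.card K = q ^ m) (hs : Nat.Coprime s m)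
    (p e : ℕ) [hp : Fact p.Prime] [CharP K p] (he : q = p ^ e) :
    ∀ (d : ℕ) (c : Fin (d + 1) → K), c ≠ 0 →
      (univ.filter fun x : K => ∑ i, c i * x ^ q ^ (s * (i : ℕ)) = 0).card ≤ q ^ d := by
  classical
  intro d
  induction d with
  | zero =>
    intro c hc
    have hc0 : c 0 ≠ 0 := by
      intro h
      apply hc
      funext i
      rw [Fin.eq_zero i]
      simpa using h
    have hsub : (univ.filter fun x : K => ∑ i, c i * x ^ q ^ (s * (i : ℕ)) = 0) ⊆ {0} := by
      intro x hx
      rw [mem_filter] at hx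
      have hx2 := hx.2
      rw [Fin.sum_univ_one] at hx2
      simp only [Fin.val_zero, mul_zero, pow_zero, pow_one] at hx2
      rw [mem_singleton]
      rcases mul_eq_zero.mp hx2 with h | h
      · exact absurd h hc0
      · exact h
    calc _ ≤ ({0} : Finset K).card := Finset.card_le_card hsub
      _ = 1 := Finset.card_singleton _
      _ ≤ q ^ 0 := by simp
  | succ d ih =>
    intro c hc
    by_cases hex : ∃ u : K, u ≠ 0 ∧ ∑ i, c i * u ^ q ^ (s * (i : ℕ)) = 0
    · obtain ⟨u, hu, hru⟩ := hex
      obtain ⟨Q, _, _, hQz, hcard⟩ := tg_cardStep hq hK hs p e he d c u hu hru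
      have hQ : Q ≠ 0 := fun hz => hc (hQz hz)
      calc (univ.filter fun x : K => ∑ i, c i * x ^ q ^ (s * (i : ℕ)) = 0).card
          ≤ q * (univ.filter fun x : K => ∑ j, Q j * x ^ q ^ (s * (j : ℕ)) = 0).card := hcard
        _ ≤ q * q ^ d := Nat.mul_le_mul_left q (ih Q hQ)
        _ = q ^ (d + 1) := by rw [pow_succ]; ring
    · have hsub : (univ.filter fun x : K => ∑ i, c i * x ^ q ^ (s * (i : ℕ)) = 0) ⊆ {0} := by
        intro x hx
        rw [mem_filter] at hx
        rw [mem_singleton]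
        by_contra hx0
        exact hex ⟨x, hx0, hx.2⟩
      calc _ ≤ ({0} : Finset K).card := Finset.card_le_card hsub
        _ = 1 := Finset.card_singleton _
        _ ≤ q ^ (d + 1) := Nat.one_le_pow _ _ (by omega)

private lemma tg_fixedE (hq : 2 ≤ q) (hK : Fintype.card K = q ^ m) (hm : 1 ≤ m)
    {u : K} (hu : u ≠ 0) (t : ℕ) :
    (u ^ (∑ i ∈ range m, q ^ i)) ^ q ^ t = u ^ (∑ i ∈ range m, q ^ i) := by
  have h1 : (1 : ℕ) ≤ q ^ m := Nat.one_le_pow _ _ (by omega)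
  have hu1 : u ^ (q ^ m - 1) = 1 := by
    have hcard := tg_pow_card hK u
    have h2 : u ^ (q ^ m - 1) * u = 1 * u := by
      rw [← pow_succ, one_mul]
      rw [show q ^ m - 1 + 1 = q ^ m from by omega]
      exact hcard
    exact mul_right_cancel₀ hu h2
  set E := ∑ i ∈ range m, q ^ i with hE
  have hEq : E * q = E + (q ^ m - 1) := by
    have h2 : E * q + 1 = E + q ^ m := by
      rw [hE, Finset.sum_mul]
      simp_rw [← pow_succ]
      have h3 := Finset.sum_range_succ' (fun i => q ^ i) m
      have h4 := Finset.sum_range_succ (fun i => q ^ i) m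
      simp only [pow_zero] at h3
      omega
    omega
  have hvq : (u ^ E) ^ q = u ^ E := by
    rw [← pow_mul, hEq, pow_add, hu1, mul_one]
  induction t with
  | zero => simp
  | succ t ih =>
    rw [pow_succ, pow_mul, ih, hvq]

private lemma tg_parity (p e : ℕ) (hp : p.Prime) [CharP K p] (he : q = p ^ e) :
    ((-1 : K)) ^ (∑ i ∈ range m, q ^ i) = (-1 : K) ^ m := by
  rcases Nat.even_or_odd q with hq | hq
  · have hp2 : p = 2 := by
      have h2 : (2 : ℕ) ∣ q := hq.two_dvd
      rw [he] at h2
      have := Nat.Prime.dvd_of_dvd_pow Nat.prime_two h2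
      exact ((Nat.prime_dvd_prime_iff_eq Nat.prime_two hp).mp this).symm
    subst hp2
    have hneg : (-1 : K) = 1 := CharTwo.neg_eq 1
    rw [hneg, one_pow, one_pow]
  · have hpar : (∑ i ∈ range m, q ^ i) % 2 = m % 2 := by
      rw [Finset.sum_nat_mod]
      have hodd : ∀ i ∈ range m, q ^ i % 2 = 1 := fun i _ =>
        Nat.odd_iff.mp (hq.pow)
      rw [Finset.sum_congr rfl hodd]
      simp
    rcases Nat.even_or_odd m with hm | hm
    · have hE : Even (∑ i ∈ range m, q ^ i) :=
        Nat.even_iff.mpr (by rw [hpar]; exact Nat.even_iff.mp hm)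
      rw [hE.neg_one_pow, hm.neg_one_pow]
    · have hE : Odd (∑ i ∈ range m, q ^ i) :=
        Nat.odd_iff.mpr (by rw [hpar]; exact Nat.odd_iff.mp hm)
      rw [hE.neg_one_pow, hm.neg_one_pow]

private lemma tg_norm (hq : 2 ≤ q) (hK : Fintype.card K = q ^ m) (hs : Nat.Coprime s m)
    (hm : 1 ≤ m) (p e : ℕ) [hp : Fact p.Prime] [CharP K p] (he : q = p ^ e) :
    ∀ (k : ℕ) (c : Fin (k + 1) → K), c (Fin.last k) ≠ 0 →
      q ^ k < (univ.filter fun x : K => ∑ i, c i * x ^ q ^ (s * (i : ℕ)) = 0).card * q →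
      c 0 ^ (∑ i ∈ range m, q ^ i)
        = (-1 : K) ^ (k * m) * c (Fin.last k) ^ (∑ i ∈ range m, q ^ i) := by
  classical
  intro k
  induction k with
  | zero =>
    intro c _ _
    have : Fin.last 0 = 0 := rfl
    rw [this]
    simp
  | succ k ih =>
    intro c hcl hcard
    set Wc : Finset K := univ.filter fun x : K => ∑ i, c i * x ^ q ^ (s * (i : ℕ)) = 0 with hWc
    have h2 : 2 ≤ Wc.card := by
      by_contra hlt
      push_neg at hlt
      have hle : Wc.card ≤ 1 := by omega
      have hle2 : Wc.card * q ≤ q := by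
        calc Wc.card * q ≤ 1 * q := Nat.mul_le_mul_right q hle
          _ = q := one_mul q
      have hqq : q ≤ q ^ (k + 1) := by
        calc q = q ^ 1 := (pow_one q).symm
          _ ≤ q ^ (k + 1) := Nat.pow_le_pow_right (by omega) (by omega)
      omega
    obtain ⟨a, ha, b, hb, hab⟩ := Finset.one_lt_card.mp h2
    have hexu : ∃ u : K, u ≠ 0 ∧ u ∈ Wc := by
      by_cases haz : a = 0
      · exact ⟨b, fun hh => hab (haz.trans hh.symm), hb⟩
      · exact ⟨a, haz, ha⟩
    obtain ⟨u, hu, huW⟩ := hexu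
    have hru : ∑ i, c i * u ^ q ^ (s * (i : ℕ)) = 0 := by
      rw [hWc, mem_filter] at huW
      exact huW.2
    obtain ⟨Q, hQl, hQ0, _, hcard2⟩ := tg_cardStep hq hK hs p e he k c u hu hru
    set WQ : Finset K := univ.filter fun x : K => ∑ j, Q j * x ^ q ^ (s * (j : ℕ)) = 0 with hWQ
    have hQcard : q ^ k < WQ.card * q := by
      have hlt : q ^ (k + 1) < (q * WQ.card) * q :=
        lt_of_lt_of_le hcard (Nat.mul_le_mul_right q hcard2)
      have h3 : q * q ^ k < q * (WQ.card * q) := by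
        calc q * q ^ k = q ^ (k + 1) := by rw [pow_succ]; ring
          _ < (q * WQ.card) * q := hlt
          _ = q * (WQ.card * q) := by ring
      exact Nat.lt_of_mul_lt_mul_left h3
    have hQl' : Q (Fin.last k) ≠ 0 := by
      rw [hQl]
      exact mul_ne_zero hcl (pow_ne_zero _ hu)
    have hIH := ih Q hQl' hQcard
    rw [hQ0, hQl] at hIH
    set E := ∑ i ∈ range m, q ^ i with hE
    have huE : ∀ t : ℕ, (u ^ E) ^ q ^ t = u ^ E := fun t => tg_fixedE hq hK hm hu t
    have hexp1 : (-(c 0 * u)) ^ E = (-1 : K) ^ E * (c 0 ^ E * u ^ E) := by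
      rw [show -(c 0 * u) = (-1 : K) * (c 0 * u) from by ring, mul_pow, mul_pow]
    have hexp2 : (c (Fin.last (k + 1)) * u ^ q ^ (s * (k + 1))) ^ E
        = c (Fin.last (k + 1)) ^ E * u ^ E := by
      rw [mul_pow]
      congr 1
      rw [← pow_mul, mul_comm (q ^ (s * (k + 1))) E, pow_mul]
      exact huE _
    rw [hexp1, hexp2] at hIH
    have hUne : u ^ E ≠ 0 := pow_ne_zero _ hu
    have key : ((-1 : K) ^ E * c 0 ^ E) * u ^ E = ((-1 : K) ^ (k * m) * c (Fin.last (k + 1)) ^ E) * u ^ E := by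
      linear_combination hIH
    have key2 := mul_right_cancel₀ hUne key
    have hpar : ((-1 : K)) ^ E = (-1 : K) ^ m := tg_parity p e hp.out he
    rw [hpar] at key2
    have h11 : (-1 : K) ^ m * (-1 : K) ^ m = 1 := by
      rw [← mul_pow]; norm_num
    calc c 0 ^ E = ((-1 : K) ^ m * (-1 : K) ^ m) * c 0 ^ E := by rw [h11, one_mul]
      _ = (-1 : K) ^ m * ((-1 : K) ^ m * c 0 ^ E) := by ring
      _ = (-1 : K) ^ m * ((-1 : K) ^ (k * m) * c (Fin.last (k + 1)) ^ E) := by rw [key2]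
      _ = ((-1 : K) ^ m * (-1 : K) ^ (k * m)) * c (Fin.last (k + 1)) ^ E := by ring
      _ = (-1 : K) ^ ((k + 1) * m) * c (Fin.last (k + 1)) ^ E := by
          rw [← pow_add]
          congr 1
          ring

private lemma tg_exp_mod (hK : Fintype.card K = q ^ m) (x : K) (t : ℕ) :
    x ^ q ^ t = x ^ q ^ (t % m) := by
  conv_lhs => rw [← Nat.mod_add_div t m]
  rw [mul_comm m (t / m)]
  exact tg_pow_shift x (tg_pow_card hK x) (t / m) (t % m)

private lemma tg_powInj (hq : 2 ≤ q) (hm : 2 ≤ m) (hK : Fintype.card K = q ^ m)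
    {a b : ℕ} (ha : a < m) (hb : b < m) (hfun : ∀ x : K, x ^ q ^ a = x ^ q ^ b) : a = b := by
  classical
  obtain ⟨g, hg⟩ := IsCyclic.exists_generator (α := Kˣ)
  have horder : orderOf g = q ^ m - 1 := by
    rw [orderOf_eq_card_of_forall_mem_zpowers hg, Nat.card_eq_fintype_card,
      Fintype.card_units, hK]
  have hgl : g ^ q ^ a = g ^ q ^ b := by
    ext
    push_cast
    exact hfun g
  have hmod := pow_eq_pow_iff_modEq.mp hgl
  rw [horder] at hmod
  have hlt : ∀ t, t < m → q ^ t < q ^ m - 1 := by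
    intro t ht
    have h1 : q ^ t ≤ q ^ (m - 1) := Nat.pow_le_pow_right (by omega) (by omega)
    have h3 : q ^ (m - 1) * q = q ^ m := by
      rw [← pow_succ]
      congr 1
      omega
    have h4 : 2 ≤ q ^ (m - 1) := le_trans hq (Nat.le_self_pow (by omega) q)
    have h5 : q ^ (m - 1) * 2 ≤ q ^ (m - 1) * q := Nat.mul_le_mul_left _ hq
    omega
  have hmod2 : q ^ a = q ^ b := by
    have := hmod
    unfold Nat.ModEq at this
    rw [Nat.mod_eq_of_lt (hlt a ha), Nat.mod_eq_of_lt (hlt b hb)] at this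
    exact this
  exact Nat.pow_right_injective hq hmod2

private lemma tg_res_inj (hs : Nat.Coprime s m) {i j : ℕ} (hi : i < m) (hj : j < m)
    (hij : (s * i) % m = (s * j) % m) : i = j := by
  have h1 : ((s * i : ℕ) : ZMod m) = ((s * j : ℕ) : ZMod m) := by
    rw [← ZMod.natCast_mod (s * i) m, ← ZMod.natCast_mod (s * j) m, hij]
  have hsu : IsUnit ((s : ℕ) : ZMod m) := (ZMod.isUnit_iff_coprime s m).mpr hs
  push_cast at h1
  have h2 : ((i : ℕ) : ZMod m) = ((j : ℕ) : ZMod m) := hsu.mul_left_cancel h1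
  have h3 := (ZMod.natCast_eq_natCast_iff i j m).mp h2
  unfold Nat.ModEq at h3
  rwa [Nat.mod_eq_of_lt hi, Nat.mod_eq_of_lt hj] at h3

end TwistedGabidulinAux

/-- Sheekey's twisted Gabidulin code
`H_{k,s}(η,h) = { a₀x + a₁x^{q^s} + ⋯ + a_{k-1}x^{q^{s(k-1)}} + η a₀^{q^h} x^{q^{sk}} }`
over `F_{q^m}`, with `gcd(s,m) = 1`, `1 ≤ k ≤ m-1` and `N_{q^m/q}(η) ≠ (-1)^{km}`,
is an MRD code: it has `q^{km}` elements and every nonzero element has at most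
`q^{k-1}` roots in `F_{q^m}`. -/
theorem twisted_gabidulin_is_MRD (q s m k h : ℕ) (hm : 2 ≤ m)
    (hs : Nat.Coprime s m) (hk1 : 1 ≤ k) (hk2 : k ≤ m - 1)
    (K : Type*) [Field K] [Fintype K] (hK : Fintype.card K = q ^ m)
    (η : K) (hη : η ^ (∑ i ∈ Finset.range m, q ^ i) ≠ (-1) ^ (k * m)) :
    Set.ncard {f : K → K | ∃ a : Fin k → K,
        f = fun x => (∑ i, a i * x ^ q ^ (s * (i : ℕ)))
          + η * (a ⟨0, hk1⟩) ^ q ^ h * x ^ q ^ (s * k)} = q ^ (k * m) ∧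
    ∀ f ∈ {f : K → K | ∃ a : Fin k → K,
        f = fun x => (∑ i, a i * x ^ q ^ (s * (i : ℕ)))
          + η * (a ⟨0, hk1⟩) ^ q ^ h * x ^ q ^ (s * k)},
      f ≠ 0 → Set.ncard {x : K | f x = 0} ≤ q ^ (k - 1) := by
  classical
  -- basic facts
  have hq2 : 2 ≤ q := by
    by_contra hq
    push_neg at hq
    have hcard2 : 2 ≤ Fintype.card K := Fintype.one_lt_card
    have hle : q ^ m ≤ 1 ^ m := Nat.pow_le_pow_left (by omega) m
    rw [one_pow] at hle
    omega
  obtain ⟨p, hchar⟩ := CharP.exists K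
  haveI : CharP K p := hchar
  have hp : p.Prime := CharP.char_is_prime K p
  haveI : Fact p.Prime := ⟨hp⟩
  obtain ⟨n, -, hcardp⟩ := FiniteField.card K p
  have hqdvd : q ∣ p ^ (n : ℕ) := by
    rw [← hcardp, hK]
    exact dvd_pow_self q (by omega)
  obtain ⟨e, -, he⟩ := (Nat.dvd_prime_pow hp).mp hqdvd
  -- injectivity of the coefficient map
  set F : (Fin k → K) → (K → K) := fun a => fun x =>
    (∑ i, a i * x ^ q ^ (s * (i : ℕ))) + η * (a ⟨0, hk1⟩) ^ q ^ h * x ^ q ^ (s * k) with hF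
  have hinj : Function.Injective F := by
    intro a a' hFa
    set r : Fin (k + 1) → ℕ := fun i => (s * (i : ℕ)) % m with hr
    have hrlt : ∀ i : Fin (k + 1), r i < m := fun i => Nat.mod_lt _ (by omega)
    have hilt : ∀ i : Fin (k + 1), (i : ℕ) < m := by
      intro i
      have := i.isLt
      omega
    set χ : Fin (k + 1) → (K →* K) := fun i => powMonoidHom (q ^ r i) with hχ
    have hχinj : Function.Injective χ := by
      intro i j hij
      have hfun : ∀ x : K, x ^ q ^ r i = x ^ q ^ r j := by
        intro x
        have := congrArg (fun φ : K →* K => φ x) hij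
        simpa [hχ, powMonoidHom_apply] using this
      have hrij : r i = r j := tg_powInj hq2 hm hK (hrlt i) (hrlt j) hfun
      exact Fin.ext (tg_res_inj hs (hilt i) (hilt j) hrij)
    have hLI := (linearIndependent_monoidHom K K).comp χ hχinj
    set b : Fin (k + 1) → K := fun i =>
      if hik : (i : ℕ) < k then a ⟨i, hik⟩ - a' ⟨i, hik⟩
      else η * (a ⟨0, hk1⟩) ^ q ^ h - η * (a' ⟨0, hk1⟩) ^ q ^ h with hb
    have hzero : ∑ i, b i • (((fun φ : K →* K => ⇑φ) ∘ χ) i) = 0 := by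
      funext x
      have h1 := congrFun hFa x
      simp only [hF] at h1
      simp only [Function.comp, Finset.sum_apply, Pi.smul_apply, smul_eq_mul,
        Pi.zero_apply, hχ, powMonoidHom_apply]
      have hswap : ∀ t : ℕ, x ^ q ^ ((s * t) % m) = x ^ q ^ (s * t) :=
        fun t => (tg_exp_mod hK x (s * t)).symm
      rw [Fin.sum_univ_castSucc]
      have hlastval : b (Fin.last k) * x ^ q ^ r (Fin.last k)
          = (η * (a ⟨0, hk1⟩) ^ q ^ h - η * (a' ⟨0, hk1⟩) ^ q ^ h) * x ^ q ^ (s * k) := by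
        rw [hb, hr]
        simp only [Fin.val_last]
        rw [dif_neg (lt_irrefl k), hswap k]
      have hcastval : ∀ i : Fin k, b i.castSucc * x ^ q ^ r i.castSucc
          = (a i - a' i) * x ^ q ^ (s * (i : ℕ)) := by
        intro i
        rw [hb, hr]
        simp only [Fin.coe_castSucc]
        rw [dif_pos i.isLt, hswap (i : ℕ)]
      rw [Finset.sum_congr rfl (fun i _ => hcastval i), hlastval]
      simp only [sub_mul]
      rw [Finset.sum_sub_distrib]
      linear_combination h1
    have hball := Fintype.linearIndependent_iff.mp hLI b hzero
    funext i
    have hbi := hball i.castSucc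
    rw [hb] at hbi
    simp only [Fin.coe_castSucc] at hbi
    rw [dif_pos i.isLt] at hbi
    have : a ⟨(i : ℕ), i.isLt⟩ = a' ⟨(i : ℕ), i.isLt⟩ := sub_eq_zero.mp hbi
    simpa using this
  constructor
  · -- cardinality
    have hset : {f : K → K | ∃ a : Fin k → K,
        f = fun x => (∑ i, a i * x ^ q ^ (s * (i : ℕ)))
          + η * (a ⟨0, hk1⟩) ^ q ^ h * x ^ q ^ (s * k)} = Set.range F := by
      ext f
      exact ⟨fun ⟨a, ha⟩ => ⟨a, ha.symm⟩, fun ⟨a, ha⟩ => ⟨a, ha.symm⟩⟩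
    rw [hset, ← Set.image_univ, Set.ncard_image_of_injective _ hinj, Set.ncard_univ,
      Nat.card_eq_fintype_card, Fintype.card_fun, Fintype.card_fin, hK, ← pow_mul,
      mul_comm m k]
  · -- root bound
    intro f hf hfne
    obtain ⟨a, rfl⟩ := hf
    have ha : a ≠ 0 := by
      rintro rfl
      apply hfne
      have hqh : q ^ h ≠ 0 := by positivity
      funext x
      simp [zero_pow hqh]
    obtain ⟨k', rfl⟩ : ∃ k', k = k' + 1 := ⟨k - 1, by omega⟩
    set c : Fin (k' + 2) → K := fun i =>
      if hik : (i : ℕ) < k' + 1 then a ⟨i, hik⟩ else η * (a ⟨0, hk1⟩) ^ q ^ h with hc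
    have hfc : ∀ x : K, (∑ i, a i * x ^ q ^ (s * (i : ℕ)))
        + η * (a ⟨0, hk1⟩) ^ q ^ h * x ^ q ^ (s * (k' + 1))
        = ∑ i : Fin (k' + 2), c i * x ^ q ^ (s * (i : ℕ)) := by
      intro x
      conv_rhs => rw [Fin.sum_univ_castSucc]
      congr 1
      · refine Finset.sum_congr rfl fun i _ => ?_
        simp only [hc, Fin.coe_castSucc]
        rw [dif_pos i.isLt]
      · simp only [hc, Fin.val_last]
        rw [dif_neg (lt_irrefl (k' + 1))]
    have hncard : {x : K | ((fun x => (∑ i, a i * x ^ q ^ (s * (i : ℕ)))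
          + η * (a ⟨0, hk1⟩) ^ q ^ h * x ^ q ^ (s * (k' + 1))) : K → K) x = 0}.ncard
        = (univ.filter fun x : K => ∑ i : Fin (k' + 2), c i * x ^ q ^ (s * (i : ℕ)) = 0).card := by
      rw [Set.ncard_eq_toFinset_card', Set.toFinset_setOf]
      congr 1
      refine Finset.filter_congr fun x _ => ?_
      simp only [hfc x]
    rw [hncard]
    have hexp : (k' + 1) - 1 = k' := by omega
    rw [hexp]
    by_cases hcl : c (Fin.last (k' + 1)) = 0
    · have hfe : (univ.filter fun x : K => ∑ i : Fin (k' + 2), c i * x ^ q ^ (s * (i : ℕ)) = 0)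
          = (univ.filter fun x : K => ∑ i : Fin (k' + 1), a i * x ^ q ^ (s * (i : ℕ)) = 0) := by
        refine Finset.filter_congr fun x _ => ?_
        have heq : ∑ i : Fin (k' + 2), c i * x ^ q ^ (s * (i : ℕ))
            = ∑ i : Fin (k' + 1), a i * x ^ q ^ (s * (i : ℕ)) := by
          rw [Fin.sum_univ_castSucc, hcl, zero_mul, add_zero]
          refine Finset.sum_congr rfl fun i _ => ?_
          simp only [hc, Fin.coe_castSucc]
          rw [dif_pos i.isLt]
        rw [heq]
      rw [hfe]
      exact tg_rootBound hq2 hK hs p e he k' a ha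
    · by_contra hgt
      push_neg at hgt
      have hgt' : q ^ (k' + 1)
          < (univ.filter fun x : K => ∑ i : Fin (k' + 2), c i * x ^ q ^ (s * (i : ℕ)) = 0).card * q := by
        have h1 : q ^ k' + 1
            ≤ (univ.filter fun x : K => ∑ i : Fin (k' + 2), c i * x ^ q ^ (s * (i : ℕ)) = 0).card := hgt
        have h2 : (q ^ k' + 1) * q ≤ _ * q := Nat.mul_le_mul_right q h1
        calc q ^ (k' + 1) = q ^ k' * q := pow_succ q k'
          _ < (q ^ k' + 1) * q := by nlinarith
          _ ≤ _ := h2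
      have hnorm := tg_norm hq2 hK hs (by omega) p e he (k' + 1) c hcl hgt'
      have hc0 : c 0 = a ⟨0, hk1⟩ := by
        have h0 : ((0 : Fin (k' + 2)) : ℕ) < k' + 1 := by simp
        simp only [hc]
        rw [dif_pos h0]
        exact congrArg a (Fin.ext (by simp))
      have hclv : c (Fin.last (k' + 1)) = η * (a ⟨0, hk1⟩) ^ q ^ h := by
        simp only [hc, Fin.val_last]
        rw [dif_neg (lt_irrefl (k' + 1))]
      rw [hc0, hclv] at hnorm
      have hqh : q ^ h ≠ 0 := by positivity
      have ha0 : a ⟨0, hk1⟩ ≠ 0 := by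
        intro h0
        apply hcl
        rw [hclv, h0, zero_pow hqh, mul_zero]
      set E := ∑ i ∈ Finset.range m, q ^ i with hE
      have hstep : (η * (a ⟨0, hk1⟩) ^ q ^ h) ^ E = η ^ E * (a ⟨0, hk1⟩) ^ E := by
        rw [mul_pow]
        congr 1
        rw [← pow_mul, mul_comm (q ^ h) E, pow_mul]
        exact tg_fixedE hq2 hK (by omega) ha0 h
      rw [hstep] at hnorm
      have haE : (a ⟨0, hk1⟩) ^ E ≠ 0 := pow_ne_zero _ ha0
      apply hη
      have key : (1 : K) * (a ⟨0, hk1⟩) ^ E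
          = ((-1 : K) ^ ((k' + 1) * m) * η ^ E) * (a ⟨0, hk1⟩) ^ E := by
        linear_combination hnorm
      have key2 := mul_right_cancel₀ haE key
      have hsq : ((-1 : K)) ^ ((k' + 1) * m) * ((-1 : K)) ^ ((k' + 1) * m) = 1 := by
        rw [← mul_pow]; norm_num
      calc η ^ E = ((-1 : K)) ^ ((k' + 1) * m) * (((-1 : K)) ^ ((k' + 1) * m) * η ^ E) := by
            rw [← mul_assoc, hsq, one_mul]
        _ = ((-1 : K)) ^ ((k' + 1) * m) * 1 := by rw [← key2]
        _ = ((-1 : K)) ^ ((k' + 1) * m) := mul_one _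
end
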